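/- arXiv:2112.09885 — 6 statements merged into one kernel-verified Lean document; each statement's English description precedes it below -/
import Mathlib

section
/- For any partition λ and any integer i with 1 ≤ i ≤ ℓ(λ), one has the identity (1-q)·Σ_{j=1}^{λ_i} q^{-j} t^{λ'_j} = Σ_{j=i}^{ℓ(λ)} q^{-λ_j} t^{j} (1 - q^{λ_j - λ_{j+1}}), as Laurent polynomials in q and t, where λ_{ℓ(λ)+1} = 0. -/
open Finset

/-- Conjugate partition: `conj ℓ lam j = #{i < ℓ : lam i ≥ j}` (0-indexed rows). -/
def conjPart (ℓ : ℕ) (lam : ℕ → ℕ) (j : ℕ) : ℕ :=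
  ((Finset.range ℓ).filter (fun i => j ≤ lam i)).card

lemma conjPart_eq_of (ℓ : ℕ) (lam : ℕ → ℕ) (anti : Antitone lam) (k j : ℕ)
    (hk : k ≤ ℓ) (hj1 : lam k < j) (hj2 : ∀ m, m < k → j ≤ lam m) :
    conjPart ℓ lam j = k := by
  unfold conjPart
  have : (Finset.range ℓ).filter (fun i => j ≤ lam i) = Finset.range k := by
    ext m
    simp only [Finset.mem_filter, Finset.mem_range]
    constructor
    · rintro ⟨hm, hjm⟩
      by_contra h
      push_neg at h
      exact absurd (hjm.trans (anti h)) (by omega)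
    · intro hm
      exact ⟨lt_of_lt_of_le hm hk, hj2 m hm⟩
  rw [this, Finset.card_range]

lemma geo_sum {F : Type*} [Field F] (q : F) (hq : q ≠ 0) (a b : ℕ) (h : a ≤ b) :
    (1 - q) * ∑ j ∈ Finset.Ioc a b, q ^ (-(j : ℤ)) = q ^ (-(b : ℤ)) - q ^ (-(a : ℤ)) := by
  induction b, h using Nat.le_induction with
  | base => simp
  | succ b hb ih =>
    rw [← Finset.Icc_add_one_left_eq_Ioc] at ih ⊢
    rw [Finset.sum_Icc_succ_top (by omega), mul_add, ih]
    have h2 : (↑(b + 1) : ℤ) = (b : ℤ) + 1 := by push_cast; ring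
    have h1 : q ^ (-((b : ℤ) + 1)) * q = q ^ (-(b : ℤ)) := by
      rw [← zpow_add_one₀ hq]; congr 1; ring
    rw [h2]
    linear_combination -h1

lemma qpow_helper {F : Type*} [Field F] (q : F) (hq : q ≠ 0) (a b : ℕ) (h : a ≤ b) :
    q ^ (-(b : ℤ)) * (1 - q ^ (b - a)) = q ^ (-(b : ℤ)) - q ^ (-(a : ℤ)) := by
  rw [mul_sub, mul_one, ← zpow_natCast q (b - a), ← zpow_add₀ hq]
  congr 2
  push_cast [h]
  ring

/-- For a partition `λ` of length `ℓ` (0-indexed: `λ_k = lam (k-1)`, `λ_{ℓ+1} = 0`) and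
`1 ≤ i ≤ ℓ`:
`(1-q)·Σ_{j=1}^{λ_i} q^{-j} t^{λ'_j} = Σ_{j=i}^{ℓ} q^{-λ_j} t^{j} (1 - q^{λ_j - λ_{j+1}})`,
as Laurent polynomials in `q, t` (formalized in a field with `q ≠ 0`). -/
theorem macdonald_column_formula {F : Type*} [Field F] (q t : F) (hq : q ≠ 0)
    (ℓ : ℕ) (lam : ℕ → ℕ)
    (hanti : ∀ k, lam (k + 1) ≤ lam k)
    (hlen : ∀ k, ℓ ≤ k → lam k = 0)
    (hpos : ∀ k, k < ℓ → 0 < lam k)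
    (i : ℕ) (hi1 : 1 ≤ i) (hi2 : i ≤ ℓ) :
    (1 - q) * ∑ j ∈ Finset.Icc 1 (lam (i - 1)),
        q ^ (-(j : ℤ)) * t ^ (conjPart ℓ lam j)
      = ∑ j ∈ Finset.Icc i ℓ,
          q ^ (-(lam (j - 1) : ℤ)) * t ^ j * (1 - q ^ (lam (j - 1) - lam j)) := by
  have anti : Antitone lam := antitone_nat_of_succ_le hanti
  clear hpos
  suffices H : ∀ n i, 1 ≤ i → i + n = ℓ →
      (1 - q) * ∑ j ∈ Finset.Icc 1 (lam (i - 1)),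
          q ^ (-(j : ℤ)) * t ^ (conjPart ℓ lam j)
        = ∑ j ∈ Finset.Icc i ℓ,
            q ^ (-(lam (j - 1) : ℤ)) * t ^ j * (1 - q ^ (lam (j - 1) - lam j)) by
    exact H (ℓ - i) i hi1 (by omega)
  intro n
  induction n with
  | zero =>
    intro i h1 h2
    have hil : i = ℓ := by omega
    rw [hil, Finset.Icc_self, Finset.sum_singleton]
    have hl0 : lam ℓ = 0 := hlen ℓ le_rfl
    have hcp : ∀ j ∈ Finset.Icc 1 (lam (ℓ - 1)),
        q ^ (-(j : ℤ)) * t ^ (conjPart ℓ lam j) = q ^ (-(j : ℤ)) * t ^ ℓ := by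
      intro j hj
      simp only [Finset.mem_Icc] at hj
      rw [conjPart_eq_of ℓ lam anti ℓ j le_rfl (by omega)
        (fun m hm => hj.2.trans (anti (by omega)))]
    rw [Finset.sum_congr rfl hcp, ← Finset.sum_mul,
      show Finset.Icc 1 (lam (ℓ - 1)) = Finset.Ioc 0 (lam (ℓ - 1)) from
        Finset.Icc_add_one_left_eq_Ioc 0 _, ← mul_assoc,
      geo_sum q hq 0 (lam (ℓ - 1)) (Nat.zero_le _)]
    have hp := qpow_helper q hq (lam ℓ) (lam (ℓ - 1)) (anti (by omega))
    rw [hl0] at hp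
    rw [hl0]
    simp only [Nat.cast_zero, neg_zero, zpow_zero, Nat.sub_zero] at hp ⊢
    linear_combination (-(t ^ ℓ)) * hp
  | succ n ih =>
    intro i h1 h2
    have hIH := ih (i + 1) (by omega) (by omega)
    simp only [Nat.add_sub_cancel] at hIH
    have hab : lam i ≤ lam (i - 1) := anti (Nat.sub_le i 1)
    rw [show Finset.Icc 1 (lam (i - 1)) = Finset.Ioc 0 (lam (i - 1)) from
      Finset.Icc_add_one_left_eq_Ioc 0 _,
      ← Finset.sum_Ioc_consecutive _ (Nat.zero_le (lam i)) hab, mul_add]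
    rw [show Finset.Icc 1 (lam i) = Finset.Ioc 0 (lam i) from Finset.Icc_add_one_left_eq_Ioc 0 _,
      show Finset.Icc (i + 1) ℓ = Finset.Ioc i ℓ from Finset.Icc_add_one_left_eq_Ioc i _] at hIH
    rw [show Finset.Icc i ℓ = Finset.Ioc (i - 1) ℓ from by
        rw [← Finset.Icc_add_one_left_eq_Ioc]; congr 1; omega,
      ← Finset.sum_Ioc_consecutive _ (show i - 1 ≤ i by omega) (show i ≤ ℓ by omega),
      show Finset.Ioc (i - 1) i = {i} from by ext m; simp [Finset.mem_Ioc]; omega,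
      Finset.sum_singleton]
    have key : (1 - q) * ∑ j ∈ Finset.Ioc (lam i) (lam (i - 1)),
        q ^ (-(j : ℤ)) * t ^ (conjPart ℓ lam j)
        = q ^ (-(lam (i - 1) : ℤ)) * t ^ i * (1 - q ^ (lam (i - 1) - lam i)) := by
      have hcp : ∀ j ∈ Finset.Ioc (lam i) (lam (i - 1)),
          q ^ (-(j : ℤ)) * t ^ (conjPart ℓ lam j) = q ^ (-(j : ℤ)) * t ^ i := by
        intro j hj
        simp only [Finset.mem_Ioc] at hj
        rw [conjPart_eq_of ℓ lam anti i j (by omega) (by omega)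
          (fun m hm => hj.2.trans (anti (by omega)))]
      rw [Finset.sum_congr rfl hcp, ← Finset.sum_mul, ← mul_assoc,
        geo_sum q hq (lam i) (lam (i - 1)) hab]
      have hp := qpow_helper q hq (lam i) (lam (i - 1)) hab
      linear_combination (-(t ^ i)) * hp
    linear_combination hIH + key
end

section
/- Let λ be a partition. Define for a nonzero integer m the quantity E_{λ,m} = 1/(1-t^m) + Σ_{j=1}^{ℓ(λ)} (q^{-m λ_j} - 1) t^{m(j-1)}, an element of the field of rational functions in q^m, t^m. Then E_{λ,m} = (1/(1-t^m)) · ( Σ_{□∈A(λ)} q^{m·c(□)} − (t/q)^m Σ_{■∈R(λ)} q^{m·c(■)} ), where for a cell (i,j) we write q^{m·c((i,j))} = t^{m(i-1)} q^{-m(j-1)}, A(λ) is the set of addable cells of λ, and R(λ) is the set of removable cells of λ. -/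
open Finset

/-- `E_{λ,m} = 1/(1-t^m) + Σ_{j=1}^{ℓ(λ)} (q^{-m λ_j} - 1) t^{m(j-1)}` (0-indexed rows). -/
noncomputable def Eqt {F : Type*} [Field F] (q t : F) (m : ℤ) (ℓ : ℕ) (lam : ℕ → ℕ) : F :=
  (1 - t ^ m)⁻¹ + ∑ j ∈ Finset.range ℓ, (q ^ (-(m * (lam j : ℤ))) - 1) * t ^ (m * (j : ℤ))

/-- `E_{λ,m}` in terms of addable and removable cells: for a partition `λ` of length `ℓ`
(0-indexed), `E_{λ,m} = (1/(1-t^m)) · ( Σ_{□∈A(λ)} q^{m·c(□)} − (t/q)^m Σ_{■∈R(λ)} q^{m·c(■)} )`,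
where `q^{m·c((i,j))} = t^{m(i-1)} q^{-m(j-1)}` (math 1-indexed cells), the addable cell in row
`i` is `(i, λ_i + 1)` and the removable cell is `(i, λ_i)`. -/
theorem Eqt_addable_removable {F : Type*} [Field F] (q t : F) (hq : q ≠ 0) (ht : t ≠ 0)
    (m : ℤ) (hm : m ≠ 0) (htm : t ^ m ≠ 1)
    (ℓ : ℕ) (lam : ℕ → ℕ)
    (hanti : ∀ k, lam (k + 1) ≤ lam k)
    (hlen : ∀ k, ℓ ≤ k → lam k = 0)
    (hpos : ∀ k, k < ℓ → 0 < lam k) :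
    Eqt q t m ℓ lam
      = (1 - t ^ m)⁻¹ *
        ((∑ i ∈ (Finset.range (ℓ + 1)).filter (fun i => i = 0 ∨ lam i < lam (i - 1)),
            t ^ (m * (i : ℤ)) * q ^ (-(m * (lam i : ℤ))))
          - (t / q) ^ m *
            ∑ i ∈ (Finset.range ℓ).filter (fun i => lam (i + 1) < lam i),
              t ^ (m * (i : ℤ)) * q ^ (-(m * ((lam i : ℤ) - 1)))) := by
  have h1s : (1 : F) - t ^ m ≠ 0 := sub_ne_zero.mpr fun h => htm h.symm
  have htpow : ∀ i : ℕ, t ^ (m * ((i : ℤ) + 1)) = t ^ (m * (i : ℤ)) * t ^ m := by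
    intro i
    rw [show m * ((i : ℤ) + 1) = m * (i : ℤ) + m by ring, zpow_add₀ ht]
  -- Claim 1: absorb (t/q)^m into the removable sum
  have claim1 : (t / q) ^ m *
      ∑ i ∈ (Finset.range ℓ).filter (fun i => lam (i + 1) < lam i),
        t ^ (m * (i : ℤ)) * q ^ (-(m * ((lam i : ℤ) - 1)))
    = ∑ i ∈ (Finset.range ℓ).filter (fun i => lam (i + 1) < lam i),
        t ^ (m * ((i : ℤ) + 1)) * q ^ (-(m * (lam i : ℤ))) := by
    rw [Finset.mul_sum]
    refine Finset.sum_congr rfl fun i _ => ?_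
    rw [div_eq_mul_inv, mul_zpow, inv_zpow, ← zpow_neg, htpow,
        show -(m * (lam i : ℤ)) = -m + -(m * ((lam i : ℤ) - 1)) by ring,
        zpow_add₀ hq]
    ring
  -- reindex the complements
  have reindex : ∑ i ∈ (Finset.range ℓ).filter (fun i => ¬ lam (i + 1) < lam i),
        t ^ (m * ((i : ℤ) + 1)) * q ^ (-(m * (lam i : ℤ)))
      = ∑ i ∈ (Finset.range (ℓ + 1)).filter (fun i => ¬ (i = 0 ∨ lam i < lam (i - 1))),
        t ^ (m * (i : ℤ)) * q ^ (-(m * (lam i : ℤ))) := by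
    refine Finset.sum_nbij' (fun i => i + 1) (fun j => j - 1) ?_ ?_ ?_ ?_ ?_
    · intro a ha
      simp only [Finset.mem_filter, Finset.mem_range, not_lt] at ha ⊢
      refine ⟨by omega, ?_⟩
      push_neg
      refine ⟨by omega, ?_⟩
      simpa using ha.2
    · intro b hb
      simp only [Finset.mem_filter, Finset.mem_range] at hb ⊢
      push_neg at hb
      obtain ⟨hb1, hb2, hb3⟩ := hb
      constructor
      · omega
      · rw [not_lt]
        have : b - 1 + 1 = b := by omega
        rw [this]
        simpa using hb3
    · intro a ha; simp
    · intro b hb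
      simp only [Finset.mem_filter, Finset.mem_range] at hb
      push_neg at hb
      show b - 1 + 1 = b
      omega
    · intro a ha
      simp only [Finset.mem_filter, Finset.mem_range, not_lt] at ha
      have heq : lam (a + 1) = lam a := le_antisymm (hanti a) ha.2
      push_cast
      rw [heq]
  -- full sums
  have splitA := Finset.sum_filter_add_sum_filter_not (Finset.range (ℓ + 1))
      (fun i => i = 0 ∨ lam i < lam (i - 1))
      (fun i => t ^ (m * (i : ℤ)) * q ^ (-(m * (lam i : ℤ))))
  have splitR := Finset.sum_filter_add_sum_filter_not (Finset.range ℓ)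
      (fun i => lam (i + 1) < lam i)
      (fun i => t ^ (m * ((i : ℤ) + 1)) * q ^ (-(m * (lam i : ℤ))))
  -- telescoping geometric sum
  have tel : ∑ i ∈ Finset.range ℓ, (t ^ (m * (i : ℤ)) - t ^ (m * ((i : ℤ) + 1)))
      = 1 - t ^ (m * (ℓ : ℤ)) := by
    have h := Finset.sum_range_sub' (fun i : ℕ => t ^ (m * (i : ℤ))) ℓ
    simp only [Nat.cast_add, Nat.cast_one, Nat.cast_zero, mul_zero, zpow_zero] at h
    convert h using 2
  -- main computation: (1 - t^m) * Eqt = F1 - F2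
  have key : (1 - t ^ m) * Eqt q t m ℓ lam
      = (∑ i ∈ Finset.range (ℓ + 1), t ^ (m * (i : ℤ)) * q ^ (-(m * (lam i : ℤ))))
        - ∑ i ∈ Finset.range ℓ, t ^ (m * ((i : ℤ) + 1)) * q ^ (-(m * (lam i : ℤ))) := by
    rw [Eqt, mul_add, mul_inv_cancel₀ h1s, Finset.mul_sum,
        Finset.sum_range_succ, hlen ℓ le_rfl]
    simp only [Nat.cast_zero, mul_zero, neg_zero, zpow_zero, mul_one]
    have hterm : ∀ i ∈ Finset.range ℓ,
        (1 - t ^ m) * ((q ^ (-(m * (lam i : ℤ))) - 1) * t ^ (m * (i : ℤ)))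
        = (q ^ (-(m * (lam i : ℤ))) * (t ^ (m * (i : ℤ)) - t ^ (m * ((i : ℤ) + 1)))
            - (t ^ (m * (i : ℤ)) - t ^ (m * ((i : ℤ) + 1)))) := by
      intro i _
      rw [htpow]
      ring
    rw [Finset.sum_congr rfl hterm, Finset.sum_sub_distrib, tel]
    have : ∀ i ∈ Finset.range ℓ,
        q ^ (-(m * (lam i : ℤ))) * (t ^ (m * (i : ℤ)) - t ^ (m * ((i : ℤ) + 1)))
        = t ^ (m * (i : ℤ)) * q ^ (-(m * (lam i : ℤ)))
          - t ^ (m * ((i : ℤ) + 1)) * q ^ (-(m * (lam i : ℤ))) := by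
      intro i _; ring
    rw [Finset.sum_congr rfl this, Finset.sum_sub_distrib]
    ring
  -- conclude
  rw [claim1]
  have final : (∑ i ∈ (Finset.range (ℓ + 1)).filter (fun i => i = 0 ∨ lam i < lam (i - 1)),
        t ^ (m * (i : ℤ)) * q ^ (-(m * (lam i : ℤ))))
      - ∑ i ∈ (Finset.range ℓ).filter (fun i => lam (i + 1) < lam i),
        t ^ (m * ((i : ℤ) + 1)) * q ^ (-(m * (lam i : ℤ)))
      = (1 - t ^ m) * Eqt q t m ℓ lam := by
    rw [key, ← splitA, ← splitR, reindex]
    ring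
  rw [final, ← mul_assoc, inv_mul_cancel₀ h1s, one_mul]
end

section
/- For any two partitions λ, μ and nonzero integer m: −((1−t^m)/(1−q^m))·E_{λ,−m}·E_{μ,m} = t^m/((1−q^m)(1−t^m)) + Σ_{□∈μ} q^{m·a_λ(□)} t^{m(ℓ_μ(□)+1)} + Σ_{■∈λ} q^{−m(a_μ(■)+1)} t^{−m·ℓ_λ(■)}, where E_{ν,m} = 1/(1−t^m) + Σ_{j=1}^{ℓ(ν)} (q^{−m ν_j} − 1) t^{m(j−1)}, and for a cell □ = (i,j), a_ν(□) = ν_i − j and ℓ_ν(□) = ν'_j − i (arm and leg lengths relative to ν, possibly negative). -/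
open Finset

private lemma conjPart_succ (n : ℕ) (f : ℕ → ℕ) (c : ℕ) :
    conjPart (n+1) f c = conjPart n f c + if c ≤ f n then 1 else 0 := by
  unfold conjPart
  rw [Finset.range_add_one, Finset.filter_insert]
  split
  · rw [Finset.card_insert_of_notMem (by simp)]
  · simp

private lemma conjPart_eq_self (n : ℕ) (f : ℕ → ℕ) (c : ℕ) (h : ∀ i, i < n → c ≤ f i) :
    conjPart n f c = n := by
  unfold conjPart
  rw [Finset.filter_true_of_mem (fun i hi => h i (Finset.mem_range.mp hi)), Finset.card_range]

private lemma conjPart_congr (n : ℕ) (f g : ℕ → ℕ) (c : ℕ) (h : ∀ i, i < n → f i = g i) :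
    conjPart n f c = conjPart n g c := by
  unfold conjPart
  congr 1
  apply Finset.filter_congr
  intro i hi
  rw [h i (Finset.mem_range.mp hi)]

private lemma trunc_anti {f : ℕ → ℕ} (hf : ∀ k, f (k+1) ≤ f k) (L : ℕ) :
    ∀ k, (fun i => if i < L then f i else 0) (k+1) ≤ (fun i => if i < L then f i else 0) k := by
  intro k
  by_cases h : k + 1 < L
  · have hk : k < L := by omega
    simp only [if_pos h, if_pos hk]
    exact hf k
  · simp only [if_neg h]
    exact Nat.zero_le _

private lemma tele_sub {F : Type*} [Field F] (T : F) (L : ℕ) :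
    (∑ i ∈ range L, T ^ ((i:ℤ) + 1 - (L:ℤ))) - ∑ i ∈ range L, T ^ ((i:ℤ) - (L:ℤ))
      = 1 - T ^ (-(L:ℤ)) := by
  rw [← Finset.sum_sub_distrib]
  have h := Finset.sum_range_sub (fun i : ℕ => T ^ ((i:ℤ) - (L:ℤ))) L
  simp only [Nat.cast_zero, zero_sub, sub_self, zpow_zero] at h
  rw [← h]
  refine Finset.sum_congr rfl fun i _ => ?_
  push_cast
  ring_nf

private lemma geomz {F : Type*} [Field F] (Q : F) (n : ℕ) :
    (Q - 1) * (∑ j ∈ range n, Q ^ (j:ℤ)) = Q ^ (n:ℤ) - 1 := by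
  have h := geom_sum_mul Q n
  rw [show (∑ j ∈ range n, Q ^ (j:ℤ)) = ∑ j ∈ range n, Q ^ j from
    Finset.sum_congr rfl fun j _ => zpow_natCast Q j, mul_comm, h, zpow_natCast]

private lemma tele2 {F : Type*} [Field F] (T : F) (M : ℕ) :
    (∑ i ∈ range M, (T ^ ((M:ℤ) + 1 - (i:ℤ)) - T ^ ((M:ℤ) - (i:ℤ))))
      = T ^ ((M:ℤ) + 1) - T := by
  have h := Finset.sum_range_sub (fun i : ℕ => -(T ^ ((M:ℤ) + 1 - (i:ℤ)))) M
  simp only [Nat.cast_zero, sub_zero] at h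
  rw [show (M:ℤ) + 1 - (M:ℤ) = 1 by ring, zpow_one] at h
  calc (∑ i ∈ range M, (T ^ ((M:ℤ) + 1 - (i:ℤ)) - T ^ ((M:ℤ) - (i:ℤ))))
      = ∑ i ∈ range M, (-(T ^ ((M:ℤ) + 1 - ((i:ℤ)+1))) - -(T ^ ((M:ℤ) + 1 - (i:ℤ)))) := by
        refine Finset.sum_congr rfl fun i _ => by ring_nf
    _ = ∑ i ∈ range M, (-(T ^ ((M:ℤ) + 1 - ((i+1:ℕ):ℤ))) - -(T ^ ((M:ℤ) + 1 - (i:ℤ)))) := by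
        refine Finset.sum_congr rfl fun i _ => by push_cast; ring_nf
    _ = -T - -(T ^ ((M:ℤ)+1)) := h
    _ = T ^ ((M:ℤ) + 1) - T := by ring


private lemma lemA {F : Type*} [Field F] (Q T : F) :
    ∀ (L : ℕ) (f : ℕ → ℕ), (∀ k, f (k+1) ≤ f k) → (∀ k, L ≤ k → f k = 0) →
    (∑ i ∈ range L, (Q ^ (f i : ℤ) - 1) * T ^ (-(i:ℤ)))
      = (Q - 1) * ∑ i ∈ range L, ∑ j ∈ range (f i),
          Q ^ (j:ℤ) * T ^ ((i:ℤ) + 1 - (conjPart L f (j+1) : ℤ)) := by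
  intro L
  induction L with
  | zero => intro f _ _; simp
  | succ L IH =>
    intro f hf hsupp
    have hanti : Antitone f := antitone_nat_of_succ_le hf
    set g : ℕ → ℕ := fun i => if i < L then f i else 0 with hgdef
    have hg1 : ∀ k, g (k+1) ≤ g k := trunc_anti hf L
    have hg2 : ∀ k, L ≤ k → g k = 0 := fun k hk => by simp [hgdef, Nat.not_lt.mpr hk]
    have hIH := IH g hg1 hg2
    have hgf : ∀ i, i < L → g i = f i := fun i hi => by simp [hgdef, hi]
    have hfi : ∀ i, i < L + 1 → f L ≤ f i := fun i hi => hanti (by omega)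
    have hconj_top : ∀ j, j < f L → conjPart (L+1) f (j+1) = L+1 := fun j hj =>
      conjPart_eq_self _ _ _ (fun i hi => le_trans (by omega) (hfi i hi))
    have hconj_L : ∀ j, j < f L → conjPart L f (j+1) = L := fun j hj =>
      conjPart_eq_self _ _ _ (fun i hi => le_trans (by omega) (hfi i (by omega)))
    have hconj_rest : ∀ j, f L ≤ j → conjPart (L+1) f (j+1) = conjPart L f (j+1) := by
      intro j hj
      rw [conjPart_succ, if_neg (by omega)]
      omega
    have hconjg : ∀ c, conjPart L g c = conjPart L f c := fun c =>
      conjPart_congr _ _ _ _ (fun i hi => hgf i hi)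
    -- row decompositions
    have hrow : ∀ i ∈ range L,
        (∑ j ∈ range (f i), Q ^ (j:ℤ) * T ^ ((i:ℤ) + 1 - (conjPart (L+1) f (j+1) : ℤ)))
        = (∑ j ∈ range (f L), Q ^ (j:ℤ)) * T ^ ((i:ℤ) - (L:ℤ))
          + ∑ j ∈ Ico (f L) (f i), Q ^ (j:ℤ) * T ^ ((i:ℤ) + 1 - (conjPart L f (j+1) : ℤ)) := by
      intro i hi
      rw [range_eq_Ico, ← Finset.sum_Ico_consecutive _ (Nat.zero_le (f L))
        (hfi i (by simpa using Nat.lt_succ_of_lt (mem_range.mp hi))), ← range_eq_Ico]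
      congr 1
      · rw [Finset.sum_mul]
        refine Finset.sum_congr rfl fun j hj => ?_
        rw [hconj_top j (mem_range.mp hj),
          show (i:ℤ) + 1 - ((L+1:ℕ):ℤ) = (i:ℤ) - (L:ℤ) by push_cast; ring]
      · refine Finset.sum_congr rfl fun j hj => ?_
        rw [hconj_rest j (mem_Ico.mp hj).1]
    have hrowg : ∀ i ∈ range L,
        (∑ j ∈ range (g i), Q ^ (j:ℤ) * T ^ ((i:ℤ) + 1 - (conjPart L g (j+1) : ℤ)))
        = (∑ j ∈ range (f L), Q ^ (j:ℤ)) * T ^ ((i:ℤ) + 1 - (L:ℤ))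
          + ∑ j ∈ Ico (f L) (f i), Q ^ (j:ℤ) * T ^ ((i:ℤ) + 1 - (conjPart L f (j+1) : ℤ)) := by
      intro i hi
      have hiL := mem_range.mp hi
      rw [hgf i hiL]
      rw [range_eq_Ico, ← Finset.sum_Ico_consecutive _ (Nat.zero_le (f L))
        (hfi i (by omega)), ← range_eq_Ico]
      congr 1
      · rw [Finset.sum_mul]
        refine Finset.sum_congr rfl fun j hj => ?_
        rw [hconjg, hconj_L j (mem_range.mp hj)]
      · refine Finset.sum_congr rfl fun j hj => ?_
        rw [hconjg]
    -- expand the (L+1)-sums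
    rw [Finset.sum_range_succ, Finset.sum_range_succ]
    rw [Finset.sum_congr rfl hrow]
    have hlast : (∑ j ∈ range (f L), Q ^ (j:ℤ) * T ^ ((L:ℤ) + 1 - (conjPart (L+1) f (j+1) : ℤ)))
        = ∑ j ∈ range (f L), Q ^ (j:ℤ) := by
      refine Finset.sum_congr rfl fun j hj => ?_
      rw [hconj_top j (mem_range.mp hj),
        show (L:ℤ) + 1 - ((L+1:ℕ):ℤ) = 0 by push_cast; ring, zpow_zero, mul_one]
    rw [hlast]
    rw [Finset.sum_congr rfl hrowg] at hIH
    rw [Finset.sum_add_distrib] at hIH ⊢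
    rw [← Finset.mul_sum] at hIH ⊢
    rw [show (∑ i ∈ range L, (Q ^ (f i : ℤ) - 1) * T ^ (-(i:ℤ)))
      = ∑ i ∈ range L, (Q ^ (g i : ℤ) - 1) * T ^ (-(i:ℤ)) from
      Finset.sum_congr rfl fun i hi => by rw [hgf i (mem_range.mp hi)]]
    have htele := tele_sub T L
    have hgeom := geomz Q (f L)
    linear_combination hIH - T ^ (-(L:ℤ)) * hgeom
      + (∑ j ∈ range (f L), Q ^ (j:ℤ)) * (Q-1) * htele

private lemma lemB {F : Type*} [Field F] (Q T : F) (ht : T ≠ 0) (M : ℕ) :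
    ∀ (L : ℕ) (f : ℕ → ℕ), (∀ k, f (k+1) ≤ f k) → (∀ k, L ≤ k → f k = 0) →
    T ^ ((M:ℤ)+1) - (1 - T) * (∑ i ∈ range L, (Q ^ (f i : ℤ) - 1) * T ^ (-(i:ℤ))) * T ^ (M:ℤ)
      = Q ^ (f M : ℤ) * T
        + (∑ i ∈ range M, Q ^ (f i : ℤ) * (T ^ ((M:ℤ)+1-(i:ℤ)) - T ^ ((M:ℤ)-(i:ℤ))))
        + (1 - Q) * ∑ j ∈ range (f M), Q ^ (j:ℤ) * T ^ ((M:ℤ)+1 - (conjPart L f (j+1) : ℤ)) := by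
  intro L
  induction L with
  | zero =>
    intro f _ hsupp
    have h0 : ∀ k, f k = 0 := fun k => hsupp k (Nat.zero_le k)
    simp only [h0, Nat.cast_zero, zpow_zero, one_mul, range_zero, sum_empty, mul_zero, zero_mul,
      sub_zero, mul_one, add_zero]
    rw [tele2 T M]
    ring
  | succ L IH =>
    intro f hf hsupp
    have hanti : Antitone f := antitone_nat_of_succ_le hf
    set g : ℕ → ℕ := fun i => if i < L then f i else 0 with hgdef
    have hg1 : ∀ k, g (k+1) ≤ g k := trunc_anti hf L
    have hg2 : ∀ k, L ≤ k → g k = 0 := fun k hk => by simp [hgdef, Nat.not_lt.mpr hk]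
    have hIH := IH g hg1 hg2
    have hgf : ∀ i, i < L → g i = f i := fun i hi => by simp [hgdef, hi]
    have hfi : ∀ i, i < L + 1 → f L ≤ f i := fun i hi => hanti (by omega)
    have hconj_top : ∀ j, j < f L → conjPart (L+1) f (j+1) = L+1 := fun j hj =>
      conjPart_eq_self _ _ _ (fun i hi => le_trans (by omega) (hfi i hi))
    have hconj_L : ∀ j, j < f L → conjPart L f (j+1) = L := fun j hj =>
      conjPart_eq_self _ _ _ (fun i hi => le_trans (by omega) (hfi i (by omega)))
    have hconj_rest : ∀ j, f L ≤ j → conjPart (L+1) f (j+1) = conjPart L f (j+1) := by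
      intro j hj
      rw [conjPart_succ, if_neg (by omega)]
      omega
    have hconjg : ∀ c, conjPart L g c = conjPart L f c := fun c =>
      conjPart_congr _ _ _ _ (fun i hi => hgf i hi)
    have hgeom := geomz Q (f L)
    -- split of the a-sum
    have haS : (∑ i ∈ range (L+1), (Q ^ (f i : ℤ) - 1) * T ^ (-(i:ℤ)))
        = (∑ i ∈ range L, (Q ^ (g i : ℤ) - 1) * T ^ (-(i:ℤ)))
          + (Q ^ (f L : ℤ) - 1) * T ^ (-(L:ℤ)) := by
      rw [Finset.sum_range_succ]
      congr 1
      exact Finset.sum_congr rfl fun i hi => by rw [hgf i (mem_range.mp hi)]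
    rw [haS]
    rcases lt_trichotomy M L with hML | hML | hML
    · -- M < L
      have hfM : g M = f M := hgf M hML
      have hfLM : f L ≤ f M := hfi M (by omega)
      have h3 : (∑ j ∈ range (f M), Q ^ (j:ℤ) * T ^ ((M:ℤ)+1 - (conjPart (L+1) f (j+1) : ℤ)))
          = (∑ j ∈ range (f L), Q ^ (j:ℤ)) * (T ^ (M:ℤ) * T ^ (-(L:ℤ)))
            + ∑ j ∈ Ico (f L) (f M), Q ^ (j:ℤ) * T ^ ((M:ℤ)+1 - (conjPart L f (j+1) : ℤ)) := by
        rw [range_eq_Ico, ← Finset.sum_Ico_consecutive _ (Nat.zero_le (f L)) hfLM,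
          ← range_eq_Ico]
        congr 1
        · rw [Finset.sum_mul]
          refine Finset.sum_congr rfl fun j hj => ?_
          rw [hconj_top j (mem_range.mp hj),
            show ((M:ℤ)+1 - ((L+1:ℕ):ℤ)) = (M:ℤ) + -(L:ℤ) by push_cast; ring,
            zpow_add₀ ht]
        · refine Finset.sum_congr rfl fun j hj => ?_
          rw [hconj_rest j (mem_Ico.mp hj).1]
      have h3g : (∑ j ∈ range (g M), Q ^ (j:ℤ) * T ^ ((M:ℤ)+1 - (conjPart L g (j+1) : ℤ)))
          = (∑ j ∈ range (f L), Q ^ (j:ℤ)) * (T * (T ^ (M:ℤ) * T ^ (-(L:ℤ))))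
            + ∑ j ∈ Ico (f L) (f M), Q ^ (j:ℤ) * T ^ ((M:ℤ)+1 - (conjPart L f (j+1) : ℤ)) := by
        rw [hfM, range_eq_Ico, ← Finset.sum_Ico_consecutive _ (Nat.zero_le (f L)) hfLM,
          ← range_eq_Ico]
        congr 1
        · rw [Finset.sum_mul]
          refine Finset.sum_congr rfl fun j hj => ?_
          rw [hconjg, hconj_L j (mem_range.mp hj),
            show ((M:ℤ)+1 - (L:ℤ)) = 1 + ((M:ℤ) + -(L:ℤ)) by ring,
            zpow_add₀ ht, zpow_add₀ ht, zpow_one]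
        · refine Finset.sum_congr rfl fun j hj => ?_
          rw [hconjg]
      have h2 : (∑ i ∈ range M, Q ^ (f i : ℤ) * (T ^ ((M:ℤ)+1-(i:ℤ)) - T ^ ((M:ℤ)-(i:ℤ))))
          = ∑ i ∈ range M, Q ^ (g i : ℤ) * (T ^ ((M:ℤ)+1-(i:ℤ)) - T ^ ((M:ℤ)-(i:ℤ))) :=
        Finset.sum_congr rfl fun i hi => by
          have := mem_range.mp hi
          rw [hgf i (by omega)]
      rw [h3g, hfM] at hIH
      rw [h3, h2]
      linear_combination hIH + (T ^ (M:ℤ) * T ^ (-(L:ℤ))) * (1-T) * hgeom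
    · -- M = L
      subst hML
      have hgM : g M = 0 := hg2 M le_rfl
      have h3 : (∑ j ∈ range (f M), Q ^ (j:ℤ) * T ^ ((M:ℤ)+1 - (conjPart (M+1) f (j+1) : ℤ)))
          = ∑ j ∈ range (f M), Q ^ (j:ℤ) := by
        refine Finset.sum_congr rfl fun j hj => ?_
        rw [hconj_top j (mem_range.mp hj),
          show ((M:ℤ)+1 - ((M+1:ℕ):ℤ)) = 0 by push_cast; ring, zpow_zero, mul_one]
      have h2 : (∑ i ∈ range M, Q ^ (f i : ℤ) * (T ^ ((M:ℤ)+1-(i:ℤ)) - T ^ ((M:ℤ)-(i:ℤ))))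
          = ∑ i ∈ range M, Q ^ (g i : ℤ) * (T ^ ((M:ℤ)+1-(i:ℤ)) - T ^ ((M:ℤ)-(i:ℤ))) :=
        Finset.sum_congr rfl fun i hi => by rw [hgf i (mem_range.mp hi)]
      have hp : T ^ (-(M:ℤ)) * T ^ (M:ℤ) = 1 := by
        rw [← zpow_add₀ ht]; norm_num
      rw [hgM] at hIH
      simp only [Nat.cast_zero, zpow_zero, one_mul, range_zero, sum_empty, mul_zero,
        add_zero] at hIH
      rw [h3, h2]
      linear_combination hIH + hgeom - (1-T) * (Q ^ ((f M:ℕ):ℤ) - 1) * hp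
    · -- L < M
      have hfM : f M = 0 := hsupp M (by omega)
      have hgM : g M = 0 := hg2 M (by omega)
      have h2 : (∑ i ∈ range M, Q ^ (f i : ℤ) * (T ^ ((M:ℤ)+1-(i:ℤ)) - T ^ ((M:ℤ)-(i:ℤ))))
          - (∑ i ∈ range M, Q ^ (g i : ℤ) * (T ^ ((M:ℤ)+1-(i:ℤ)) - T ^ ((M:ℤ)-(i:ℤ))))
          = (Q ^ (f L : ℤ) - 1) * ((T * (T ^ (M:ℤ) * T ^ (-(L:ℤ)))) - T ^ (M:ℤ) * T ^ (-(L:ℤ))) := by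
        rw [← Finset.sum_sub_distrib]
        rw [Finset.sum_eq_single L]
        · rw [hg2 L le_rfl]
          simp only [Nat.cast_zero, zpow_zero]
          rw [show ((M:ℤ)+1-(L:ℤ)) = 1 + ((M:ℤ) + -(L:ℤ)) by ring,
            show ((M:ℤ)-(L:ℤ)) = (M:ℤ) + -(L:ℤ) by ring,
            zpow_add₀ ht, zpow_add₀ ht, zpow_one]
          ring
        · intro i _ hiL
          rcases Nat.lt_or_ge i L with h | h
          · rw [hgf i h]; ring
          · rw [hsupp i (by omega), hg2 i h]; ring
        · intro h
          exact absurd (mem_range.mpr hML) h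
      rw [hgM] at hIH
      simp only [Nat.cast_zero, zpow_zero, one_mul, range_zero, sum_empty, mul_zero,
        add_zero] at hIH
      rw [hfM]
      simp only [Nat.cast_zero, zpow_zero, one_mul, range_zero, sum_empty, mul_zero, add_zero]
      linear_combination hIH - h2

private lemma geomzneg {F : Type*} [Field F] (Q : F) (hq : Q ≠ 0) (n : ℕ) :
    (1 - Q) * (∑ j ∈ range n, Q ^ (-(j:ℤ)-1)) = Q ^ (-(n:ℤ)) - 1 := by
  have h := Finset.sum_range_sub (fun j : ℕ => Q ^ (-(j:ℤ))) n
  simp only [Nat.cast_zero, neg_zero, zpow_zero] at h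
  rw [Finset.mul_sum, ← h]
  refine Finset.sum_congr rfl fun j _ => ?_
  rw [show -((j:ℤ)) = (-(j:ℤ)-1) + 1 by ring, zpow_add_one₀ hq,
    show -((((j+1):ℕ)):ℤ) = (-(j:ℤ)-1) + 0 by push_cast; ring, zpow_add₀ hq, zpow_zero]
  ring

private lemma lemC {F : Type*} [Field F] (Q T : F) (hq : Q ≠ 0) (ht : T ≠ 0)
    (L : ℕ) (lam : ℕ → ℕ) (hl1 : ∀ k, lam (k+1) ≤ lam k) (hl2 : ∀ k, L ≤ k → lam k = 0) :
    ∀ (M : ℕ) (mu : ℕ → ℕ), (∀ k, mu (k+1) ≤ mu k) → (∀ k, M ≤ k → mu k = 0) →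
    -(∑ i ∈ range L, (Q ^ (lam i : ℤ) - 1) * T ^ (-(i:ℤ)))
      + T * (∑ i ∈ range M, (Q ^ (-(mu i : ℤ)) - 1) * T ^ (i:ℤ))
      - (1 - T) * (∑ i ∈ range L, (Q ^ (lam i : ℤ) - 1) * T ^ (-(i:ℤ)))
          * (∑ i ∈ range M, (Q ^ (-(mu i : ℤ)) - 1) * T ^ (i:ℤ))
      = (1 - Q) * ((∑ i ∈ range M, ∑ j ∈ range (mu i),
            Q ^ ((lam i : ℤ) - (j:ℤ) - 1) * T ^ ((conjPart M mu (j+1) : ℤ) - (i:ℤ)))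
          + ∑ i ∈ range L, ∑ j ∈ range (lam i),
            Q ^ ((j:ℤ) - (mu i : ℤ)) * T ^ ((i:ℤ) + 1 - (conjPart L lam (j+1) : ℤ))) := by
  intro M
  induction M with
  | zero =>
    intro mu _ hsupp
    have hm0 : ∀ k, mu k = 0 := fun k => hsupp k (Nat.zero_le k)
    simp only [range_zero, sum_empty, mul_zero, sub_zero, add_zero, zero_add]
    have hA := lemA Q T L lam hl1 hl2
    rw [show (∑ i ∈ range L, ∑ j ∈ range (lam i),
          Q ^ ((j:ℤ) - (mu i : ℤ)) * T ^ ((i:ℤ) + 1 - (conjPart L lam (j+1) : ℤ)))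
        = ∑ i ∈ range L, ∑ j ∈ range (lam i),
          Q ^ (j:ℤ) * T ^ ((i:ℤ) + 1 - (conjPart L lam (j+1) : ℤ)) from
      Finset.sum_congr rfl fun i _ => Finset.sum_congr rfl fun j _ => by
        rw [hm0 i]; norm_num]
    linear_combination -hA
  | succ M IH =>
    intro mu hm hsupp
    have hanti : Antitone mu := antitone_nat_of_succ_le hm
    set g : ℕ → ℕ := fun i => if i < M then mu i else 0 with hgdef
    have hg1 : ∀ k, g (k+1) ≤ g k := trunc_anti hm M
    have hg2 : ∀ k, M ≤ k → g k = 0 := fun k hk => by simp [hgdef, Nat.not_lt.mpr hk]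
    have hIH := IH g hg1 hg2
    have hgf : ∀ i, i < M → g i = mu i := fun i hi => by simp [hgdef, hi]
    have hfi : ∀ i, i < M + 1 → mu M ≤ mu i := fun i hi => hanti (by omega)
    have hconj_top : ∀ j, j < mu M → conjPart (M+1) mu (j+1) = M+1 := fun j hj =>
      conjPart_eq_self _ _ _ (fun i hi => le_trans (by omega) (hfi i hi))
    have hconj_M : ∀ j, j < mu M → conjPart M mu (j+1) = M := fun j hj =>
      conjPart_eq_self _ _ _ (fun i hi => le_trans (by omega) (hfi i (by omega)))
    have hconj_rest : ∀ j, mu M ≤ j → conjPart (M+1) mu (j+1) = conjPart M mu (j+1) := by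
      intro j hj
      rw [conjPart_succ, if_neg (by omega)]
      omega
    have hconjg : ∀ c, conjPart M g c = conjPart M mu c := fun c =>
      conjPart_congr _ _ _ _ (fun i hi => hgf i hi)
    have hB := lemB Q T ht M L lam hl1 hl2
    have hβ := geomzneg Q hq (mu M)
    have hp : T ^ ((M:ℤ)+1) = T ^ (M:ℤ) * T := zpow_add_one₀ ht M
    -- b split
    have hbsplit : (∑ i ∈ range (M+1), (Q ^ (-(mu i : ℤ)) - 1) * T ^ (i:ℤ))
        = (∑ i ∈ range M, (Q ^ (-(g i : ℤ)) - 1) * T ^ (i:ℤ))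
          + (Q ^ (-(mu M : ℤ)) - 1) * T ^ (M:ℤ) := by
      rw [Finset.sum_range_succ]
      congr 1
      exact Finset.sum_congr rfl fun i hi => by rw [hgf i (mem_range.mp hi)]
    -- SL split
    have hSL : (∑ i ∈ range L, ∑ j ∈ range (lam i),
          Q ^ ((j:ℤ) - (mu i : ℤ)) * T ^ ((i:ℤ) + 1 - (conjPart L lam (j+1) : ℤ)))
        = (∑ i ∈ range L, ∑ j ∈ range (lam i),
            Q ^ ((j:ℤ) - (g i : ℤ)) * T ^ ((i:ℤ) + 1 - (conjPart L lam (j+1) : ℤ)))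
          + (Q ^ (-(mu M : ℤ)) - 1) * ∑ j ∈ range (lam M),
              Q ^ (j:ℤ) * T ^ ((M:ℤ)+1 - (conjPart L lam (j+1) : ℤ)) := by
      by_cases hML : M < L
      · have hdiff : (∑ i ∈ range L, ∑ j ∈ range (lam i),
              Q ^ ((j:ℤ) - (mu i : ℤ)) * T ^ ((i:ℤ) + 1 - (conjPart L lam (j+1) : ℤ)))
            - (∑ i ∈ range L, ∑ j ∈ range (lam i),
              Q ^ ((j:ℤ) - (g i : ℤ)) * T ^ ((i:ℤ) + 1 - (conjPart L lam (j+1) : ℤ)))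
            = (Q ^ (-(mu M : ℤ)) - 1) * ∑ j ∈ range (lam M),
                Q ^ (j:ℤ) * T ^ ((M:ℤ)+1 - (conjPart L lam (j+1) : ℤ)) := by
          rw [← Finset.sum_sub_distrib, Finset.sum_eq_single M]
          · rw [Finset.mul_sum, ← Finset.sum_sub_distrib]
            refine Finset.sum_congr rfl fun j _ => ?_
            rw [hg2 M le_rfl]
            simp only [Nat.cast_zero, sub_zero]
            rw [show (j:ℤ) - (mu M:ℤ) = -(mu M:ℤ) + (j:ℤ) by ring, zpow_add₀ hq]
            ring
          · intro i _ hne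
            rcases Nat.lt_or_ge i M with h | h
            · rw [hgf i h, sub_self]
            · rw [hsupp i (by omega), hg2 i h, sub_self]
          · intro h
            exact absurd (mem_range.mpr hML) h
        linear_combination hdiff
      · have hlamM : lam M = 0 := hl2 M (by omega)
        rw [hlamM]
        simp only [range_zero, sum_empty, mul_zero, add_zero]
        exact Finset.sum_congr rfl fun i hi => Finset.sum_congr rfl fun j _ => by
          rw [hgf i (by have := mem_range.mp hi; omega)]
    -- SM split
    have hrow : ∀ i ∈ range M,
        (∑ j ∈ range (mu i), Q ^ ((lam i:ℤ) - (j:ℤ) - 1) * T ^ ((conjPart (M+1) mu (j+1) : ℤ) - (i:ℤ)))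
        = (∑ j ∈ range (mu M), Q ^ (-(j:ℤ)-1)) * (Q ^ (lam i:ℤ) * T ^ ((M:ℤ)+1-(i:ℤ)))
          + ∑ j ∈ Ico (mu M) (mu i), Q ^ ((lam i:ℤ) - (j:ℤ) - 1) * T ^ ((conjPart M mu (j+1) : ℤ) - (i:ℤ)) := by
      intro i hi
      have hiM := mem_range.mp hi
      rw [range_eq_Ico, ← Finset.sum_Ico_consecutive _ (Nat.zero_le (mu M)) (hfi i (by omega)),
        ← range_eq_Ico]
      congr 1
      · rw [Finset.sum_mul]
        refine Finset.sum_congr rfl fun j hj => ?_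
        rw [hconj_top j (mem_range.mp hj),
          show ((lam i:ℤ) - (j:ℤ) - 1) = (-(j:ℤ)-1) + (lam i:ℤ) by ring, zpow_add₀ hq,
          show (((M+1:ℕ)):ℤ) - (i:ℤ) = (M:ℤ)+1-(i:ℤ) by push_cast; ring]
        ring
      · refine Finset.sum_congr rfl fun j hj => ?_
        rw [hconj_rest j (mem_Ico.mp hj).1]
    have hrowg : ∀ i ∈ range M,
        (∑ j ∈ range (g i), Q ^ ((lam i:ℤ) - (j:ℤ) - 1) * T ^ ((conjPart M g (j+1) : ℤ) - (i:ℤ)))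
        = (∑ j ∈ range (mu M), Q ^ (-(j:ℤ)-1)) * (Q ^ (lam i:ℤ) * T ^ ((M:ℤ)-(i:ℤ)))
          + ∑ j ∈ Ico (mu M) (mu i), Q ^ ((lam i:ℤ) - (j:ℤ) - 1) * T ^ ((conjPart M mu (j+1) : ℤ) - (i:ℤ)) := by
      intro i hi
      have hiM := mem_range.mp hi
      rw [show (∑ j ∈ range (g i), Q ^ ((lam i:ℤ) - (j:ℤ) - 1) * T ^ ((conjPart M g (j+1) : ℤ) - (i:ℤ)))
          = ∑ j ∈ range (mu i), Q ^ ((lam i:ℤ) - (j:ℤ) - 1) * T ^ ((conjPart M mu (j+1) : ℤ) - (i:ℤ)) by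
        rw [hgf i hiM]
        exact Finset.sum_congr rfl fun j _ => by rw [hconjg]]
      rw [range_eq_Ico, ← Finset.sum_Ico_consecutive _ (Nat.zero_le (mu M)) (hfi i (by omega)),
        ← range_eq_Ico]
      congr 1
      rw [Finset.sum_mul]
      refine Finset.sum_congr rfl fun j hj => ?_
      rw [hconj_M j (mem_range.mp hj),
        show ((lam i:ℤ) - (j:ℤ) - 1) = (-(j:ℤ)-1) + (lam i:ℤ) by ring, zpow_add₀ hq]
      ring
    have hlastrow : (∑ j ∈ range (mu M),
          Q ^ ((lam M:ℤ) - (j:ℤ) - 1) * T ^ ((conjPart (M+1) mu (j+1) : ℤ) - (M:ℤ)))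
        = (∑ j ∈ range (mu M), Q ^ (-(j:ℤ)-1)) * (Q ^ (lam M:ℤ) * T) := by
      rw [Finset.sum_mul]
      refine Finset.sum_congr rfl fun j hj => ?_
      rw [hconj_top j (mem_range.mp hj),
        show (((M+1:ℕ)):ℤ) - (M:ℤ) = 1 by push_cast; ring, zpow_one,
        show ((lam M:ℤ) - (j:ℤ) - 1) = (-(j:ℤ)-1) + (lam M:ℤ) by ring, zpow_add₀ hq]
      ring
    have hSM : (∑ i ∈ range (M+1), ∑ j ∈ range (mu i),
          Q ^ ((lam i:ℤ) - (j:ℤ) - 1) * T ^ ((conjPart (M+1) mu (j+1) : ℤ) - (i:ℤ)))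
        = (∑ i ∈ range M, ∑ j ∈ range (g i),
            Q ^ ((lam i:ℤ) - (j:ℤ) - 1) * T ^ ((conjPart M g (j+1) : ℤ) - (i:ℤ)))
          + (∑ j ∈ range (mu M), Q ^ (-(j:ℤ)-1)) *
            ((∑ i ∈ range M, Q ^ (lam i:ℤ) * (T ^ ((M:ℤ)+1-(i:ℤ)) - T ^ ((M:ℤ)-(i:ℤ))))
              + Q ^ (lam M:ℤ) * T) := by
      rw [Finset.sum_range_succ, Finset.sum_congr rfl hrow, Finset.sum_congr rfl hrowg,
        hlastrow, Finset.sum_add_distrib, Finset.sum_add_distrib, ← Finset.mul_sum,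
        ← Finset.mul_sum]
      have hW : (∑ i ∈ range M, Q ^ (lam i:ℤ) * (T ^ ((M:ℤ)+1-(i:ℤ)) - T ^ ((M:ℤ)-(i:ℤ))))
          = (∑ i ∈ range M, Q ^ (lam i:ℤ) * T ^ ((M:ℤ)+1-(i:ℤ)))
            - ∑ i ∈ range M, Q ^ (lam i:ℤ) * T ^ ((M:ℤ)-(i:ℤ)) := by
        rw [← Finset.sum_sub_distrib]
        exact Finset.sum_congr rfl fun i _ => by ring
      rw [hW]
      ring
    rw [hbsplit, hSM, hSL]
    linear_combination hIH + (Q ^ (-(mu M:ℤ)) - 1) * hB - (Q ^ (-(mu M:ℤ)) - 1) * hp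
      - ((∑ i ∈ range M, Q ^ (lam i:ℤ) * (T ^ ((M:ℤ)+1-(i:ℤ)) - T ^ ((M:ℤ)-(i:ℤ))))
          + Q ^ (lam M:ℤ) * T) * hβ

/-- For partitions `λ, μ` and `m ≠ 0`:
`−((1−t^m)/(1−q^m))·E_{λ,−m}·E_{μ,m}
  = t^m/((1−q^m)(1−t^m)) + Σ_{□∈μ} q^{m·a_λ(□)} t^{m(ℓ_μ(□)+1)}
    + Σ_{■∈λ} q^{−m(a_μ(■)+1)} t^{−m·ℓ_λ(■)}`,
with arms and legs `a_ν((i,j)) = ν_i − j`, `ℓ_ν((i,j)) = ν'_j − i` (possibly negative). -/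
theorem Eqt_pairing {F : Type*} [Field F] (q t : F) (hq : q ≠ 0) (ht : t ≠ 0)
    (m : ℤ) (hm : m ≠ 0) (htm : t ^ m ≠ 1) (hqm : q ^ m ≠ 1)
    (L M : ℕ) (lam mu : ℕ → ℕ)
    (hal : ∀ k, lam (k + 1) ≤ lam k) (hlenl : ∀ k, L ≤ k → lam k = 0)
    (ham : ∀ k, mu (k + 1) ≤ mu k) (hlenm : ∀ k, M ≤ k → mu k = 0) :
    -((1 - t ^ m) / (1 - q ^ m)) * Eqt q t (-m) L lam * Eqt q t m M mu
      = t ^ m / ((1 - q ^ m) * (1 - t ^ m))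
        + (∑ i ∈ Finset.range M, ∑ j ∈ Finset.range (mu i),
            q ^ (m * ((lam i : ℤ) - (j + 1)))
              * t ^ (m * (((conjPart M mu (j + 1) : ℤ) - (i + 1)) + 1)))
        + ∑ i ∈ Finset.range L, ∑ j ∈ Finset.range (lam i),
            q ^ (-(m * (((mu i : ℤ) - (j + 1)) + 1)))
              * t ^ (-(m * ((conjPart L lam (j + 1) : ℤ) - (i + 1)))) := by
  have hQ0 : q ^ m ≠ 0 := zpow_ne_zero m hq
  have hT0 : t ^ m ≠ 0 := zpow_ne_zero m ht
  have h1Q : 1 - q ^ m ≠ 0 := sub_ne_zero.mpr (Ne.symm hqm)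
  have h1T : 1 - t ^ m ≠ 0 := sub_ne_zero.mpr (Ne.symm htm)
  have hC := lemC (q ^ m) (t ^ m) hQ0 hT0 L lam hal hlenl M mu ham hlenm
  have hEL : Eqt q t (-m) L lam
      = (1 - (t ^ m)⁻¹)⁻¹ + ∑ i ∈ range L, ((q ^ m) ^ (lam i : ℤ) - 1) * (t ^ m) ^ (-(i:ℤ)) := by
    simp only [Eqt]
    congr 1
    · rw [zpow_neg]
    · refine Finset.sum_congr rfl fun j _ => ?_
      rw [show -(-m * (lam j:ℤ)) = m * (lam j:ℤ) by ring, zpow_mul,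
        show -m * (j:ℤ) = m * (-(j:ℤ)) by ring, zpow_mul]
  have hEM : Eqt q t m M mu
      = (1 - t ^ m)⁻¹ + ∑ i ∈ range M, ((q ^ m) ^ (-(mu i : ℤ)) - 1) * (t ^ m) ^ (i:ℤ) := by
    simp only [Eqt]
    congr 1
    refine Finset.sum_congr rfl fun j _ => ?_
    rw [show -(m * (mu j:ℤ)) = m * (-(mu j:ℤ)) by ring, zpow_mul, zpow_mul]
  have hSmu : (∑ i ∈ Finset.range M, ∑ j ∈ Finset.range (mu i),
        q ^ (m * ((lam i : ℤ) - (j + 1))) * t ^ (m * (((conjPart M mu (j + 1) : ℤ) - (i + 1)) + 1)))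
      = ∑ i ∈ range M, ∑ j ∈ range (mu i),
        (q ^ m) ^ ((lam i : ℤ) - (j:ℤ) - 1) * (t ^ m) ^ ((conjPart M mu (j+1) : ℤ) - (i:ℤ)) := by
    refine Finset.sum_congr rfl fun i _ => Finset.sum_congr rfl fun j _ => ?_
    rw [show m * ((lam i : ℤ) - ((j:ℤ) + 1)) = m * ((lam i : ℤ) - (j:ℤ) - 1) by ring, zpow_mul,
      show m * (((conjPart M mu (j + 1) : ℤ) - ((i:ℤ) + 1)) + 1)
        = m * ((conjPart M mu (j+1) : ℤ) - (i:ℤ)) by ring, zpow_mul]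
  have hSla : (∑ i ∈ Finset.range L, ∑ j ∈ Finset.range (lam i),
        q ^ (-(m * (((mu i : ℤ) - (j + 1)) + 1))) * t ^ (-(m * ((conjPart L lam (j + 1) : ℤ) - (i + 1)))))
      = ∑ i ∈ range L, ∑ j ∈ range (lam i),
        (q ^ m) ^ ((j:ℤ) - (mu i : ℤ)) * (t ^ m) ^ ((i:ℤ) + 1 - (conjPart L lam (j+1) : ℤ)) := by
    refine Finset.sum_congr rfl fun i _ => Finset.sum_congr rfl fun j _ => ?_
    rw [show -(m * (((mu i : ℤ) - ((j:ℤ) + 1)) + 1)) = m * ((j:ℤ) - (mu i : ℤ)) by ring, zpow_mul,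
      show -(m * ((conjPart L lam (j + 1) : ℤ) - ((i:ℤ) + 1)))
        = m * ((i:ℤ) + 1 - (conjPart L lam (j+1) : ℤ)) by ring, zpow_mul]
  rw [hEL, hEM, hSmu, hSla]
  have hTinv : (1 - (t ^ m)⁻¹)⁻¹ = -(t ^ m) * (1 - t ^ m)⁻¹ := by
    rw [show (1:F) - (t ^ m)⁻¹ = (t ^ m - 1) * (t ^ m)⁻¹ by
        rw [sub_mul, mul_inv_cancel₀ hT0, one_mul],
      mul_inv, inv_inv, show (1:F) - t ^ m = -(t ^ m - 1) by ring, inv_neg]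
    ring
  rw [hTinv, show (t ^ m) / ((1 - q ^ m) * (1 - t ^ m))
      = t ^ m * ((1 - q ^ m)⁻¹ * (1 - t ^ m)⁻¹) by rw [div_eq_mul_inv, mul_inv]]
  have hu : (1 - t ^ m) * (1 - t ^ m)⁻¹ = 1 := mul_inv_cancel₀ h1T
  have hv : (1 - q ^ m) * (1 - q ^ m)⁻¹ = 1 := mul_inv_cancel₀ h1Q
  linear_combination
    ((1 - q ^ m)⁻¹ * (t ^ m) * (1 - t ^ m)⁻¹
      + (1 - q ^ m)⁻¹ * (t ^ m) * (∑ i ∈ range M, ((q ^ m) ^ (-(mu i : ℤ)) - 1) * (t ^ m) ^ (i:ℤ))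
      - (1 - q ^ m)⁻¹ * (∑ i ∈ range L, ((q ^ m) ^ (lam i : ℤ) - 1) * (t ^ m) ^ (-(i:ℤ)))) * hu
    + (1 - q ^ m)⁻¹ * hC
    + ((∑ i ∈ range M, ∑ j ∈ range (mu i),
          (q ^ m) ^ ((lam i : ℤ) - (j:ℤ) - 1) * (t ^ m) ^ ((conjPart M mu (j+1) : ℤ) - (i:ℤ)))
        + ∑ i ∈ range L, ∑ j ∈ range (lam i),
          (q ^ m) ^ ((j:ℤ) - (mu i : ℤ)) * (t ^ m) ^ ((i:ℤ) + 1 - (conjPart L lam (j+1) : ℤ))) * hv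
end

section
/- Let a_1,...,a_n, b_1,...,b_{n-1} be nonzero complex numbers with a_j pairwise distinct. Then the difference between the power-series expansion at s=0 and at s=∞ of Π_{j=1}^{n-1}(1 − s/b_j) / Π_{j=1}^{n}(1 − s/a_j) equals Σ_{k=1}^n δ(a_k/s) · Π_{j=1}^{n-1}(1 − a_k/b_j) / Π_{j≠k}(1 − a_k/a_j), as formal Laurent series, where δ(z) = Σ_{m∈ℤ} z^m. -/
open Finset

section Helpers

namespace RatFunc

lemma coe_div (f g : RatFunc ℂ) : ((f / g : RatFunc ℂ) : LaurentSeries ℂ) = f / g := map_div₀ _ _ _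

lemma coe_one : ((1 : RatFunc ℂ) : LaurentSeries ℂ) = 1 := map_one _

lemma coe_mul (f g : RatFunc ℂ) : ((f * g : RatFunc ℂ) : LaurentSeries ℂ) = f * g := map_mul _ _ _

lemma coe_sub (f g : RatFunc ℂ) : ((f - g : RatFunc ℂ) : LaurentSeries ℂ) = f - g := map_sub _ _ _

lemma coe_C (c : ℂ) : ((RatFunc.C c : RatFunc ℂ) : LaurentSeries ℂ) = HahnSeries.C c := by
  rw [← RatFunc.algebraMap_C, ← RatFunc.coePolynomial, ← RatFunc.coe_coe, Polynomial.coe_C,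
    PowerSeries.coe_C]

end RatFunc

open Polynomial

lemma g1_mul (a : ℂ) (ha : a ≠ 0) :
    (1 - PowerSeries.C a⁻¹ * PowerSeries.X) *
      (PowerSeries.C a * PowerSeries.invUnitsSub (Units.mk0 a ha)) = 1 := by
  have h := PowerSeries.invUnitsSub_mul_sub (R := ℂ) (Units.mk0 a ha)
  have h2 : (1 - PowerSeries.C a⁻¹ * PowerSeries.X) = PowerSeries.C a⁻¹ * (PowerSeries.C (Units.mk0 a ha : ℂ) - PowerSeries.X) := by
    rw [mul_sub, ← map_mul]
    simp [inv_mul_cancel₀ ha]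
  rw [mul_comm] at h
  calc (1 - PowerSeries.C a⁻¹ * PowerSeries.X) * (PowerSeries.C a * PowerSeries.invUnitsSub (Units.mk0 a ha))
      = PowerSeries.C a⁻¹ * PowerSeries.C a * ((PowerSeries.C ↑(Units.mk0 a ha) - PowerSeries.X) * PowerSeries.invUnitsSub (Units.mk0 a ha)) := by rw [h2]; ring
    _ = 1 := by rw [h, ← map_mul, inv_mul_cancel₀ ha]; simp

lemma g2_mul (a : ℂ) (ha : a ≠ 0) :
    (PowerSeries.X - PowerSeries.C a⁻¹) *
      (- PowerSeries.invUnitsSub (Units.mk0 a⁻¹ (inv_ne_zero ha))) = 1 := by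
  have h := PowerSeries.invUnitsSub_mul_sub (R := ℂ) (Units.mk0 a⁻¹ (inv_ne_zero ha))
  rw [mul_comm] at h
  rw [show (PowerSeries.X - PowerSeries.C a⁻¹) = -(PowerSeries.C ↑(Units.mk0 a⁻¹ (inv_ne_zero ha)) - PowerSeries.X) from by simp [neg_sub], neg_mul_neg, h]

lemma ratfunc_factor_ne_zero (c : ℂ) : (1 - RatFunc.C c * RatFunc.X : RatFunc ℂ) ≠ 0 := by
  have : (1 - Polynomial.C c * Polynomial.X : ℂ[X]) ≠ 0 := by
    intro h
    have := congrArg (Polynomial.coeff · 0) h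
    simp at this
  have h2 := RatFunc.algebraMap_ne_zero (K := ℂ) this
  rwa [map_sub, map_one, map_mul, RatFunc.algebraMap_C, RatFunc.algebraMap_X] at h2

lemma ratfunc_factor2_ne_zero (c : ℂ) : (RatFunc.X - RatFunc.C c : RatFunc ℂ) ≠ 0 := by
  have : (Polynomial.X - Polynomial.C c : ℂ[X]) ≠ 0 := Polynomial.X_sub_C_ne_zero c
  have h2 := RatFunc.algebraMap_ne_zero (K := ℂ) this
  rwa [map_sub, RatFunc.algebraMap_C, RatFunc.algebraMap_X] at h2

lemma coe1 (a : ℂ) (ha : a ≠ 0) :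
    (((1 - RatFunc.C a⁻¹ * RatFunc.X)⁻¹ : RatFunc ℂ) : LaurentSeries ℂ) =
      ((PowerSeries.C a * PowerSeries.invUnitsSub (Units.mk0 a ha) : PowerSeries ℂ) : LaurentSeries ℂ) := by
  rw [show ((_)⁻¹ : RatFunc ℂ) = 1 / _ from (one_div _).symm, RatFunc.coe_div, RatFunc.coe_one, one_div]
  refine inv_eq_of_mul_eq_one_right ?_
  have : ((1 - RatFunc.C a⁻¹ * RatFunc.X : RatFunc ℂ) : LaurentSeries ℂ) =
      ((1 - PowerSeries.C a⁻¹ * PowerSeries.X : PowerSeries ℂ) : LaurentSeries ℂ) := by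
    push_cast [RatFunc.coe_sub, RatFunc.coe_one, RatFunc.coe_mul, RatFunc.coe_C, RatFunc.coe_X,
      PowerSeries.coe_sub, PowerSeries.coe_one, PowerSeries.coe_mul, PowerSeries.coe_C, PowerSeries.coe_X]
    rfl
  rw [this, ← PowerSeries.coe_mul, g1_mul a ha, PowerSeries.coe_one]

lemma coe2 (a : ℂ) (ha : a ≠ 0) :
    (((RatFunc.X - RatFunc.C a⁻¹)⁻¹ : RatFunc ℂ) : LaurentSeries ℂ) =
      ((- PowerSeries.invUnitsSub (Units.mk0 a⁻¹ (inv_ne_zero ha)) : PowerSeries ℂ) : LaurentSeries ℂ) := by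
  rw [show ((_)⁻¹ : RatFunc ℂ) = 1 / _ from (one_div _).symm, RatFunc.coe_div, RatFunc.coe_one, one_div]
  refine inv_eq_of_mul_eq_one_right ?_
  have : ((RatFunc.X - RatFunc.C a⁻¹ : RatFunc ℂ) : LaurentSeries ℂ) =
      ((PowerSeries.X - PowerSeries.C a⁻¹ : PowerSeries ℂ) : LaurentSeries ℂ) := by
    push_cast [RatFunc.coe_sub, RatFunc.coe_C, RatFunc.coe_X,
      PowerSeries.coe_sub, PowerSeries.coe_C, PowerSeries.coe_X]
    rfl
  rw [this, ← PowerSeries.coe_mul, g2_mul a ha, PowerSeries.coe_one]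

lemma coeff1 (a : ℂ) (ha : a ≠ 0) (m : ℤ) :
    (((1 - RatFunc.C a⁻¹ * RatFunc.X)⁻¹ : RatFunc ℂ) : LaurentSeries ℂ).coeff m
      = if 0 ≤ m then a ^ (-m) else 0 := by
  rw [coe1 a ha, PowerSeries.coeff_coe]
  by_cases h : 0 ≤ m
  · rw [if_neg (not_lt.2 h), if_pos h, PowerSeries.coeff_C_mul,
      PowerSeries.coeff_invUnitsSub, one_divp]
    set n := m.natAbs with hn
    have hm : (n : ℤ) = m := Int.natAbs_of_nonneg h
    rw [← hm, Units.val_inv_eq_inv_val]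
    simp only [Units.val_pow_eq_pow_val, Units.val_mk0]
    rw [zpow_neg, zpow_natCast, pow_succ]
    field_simp
  · rw [if_pos (not_le.1 h), if_neg h]

lemma coeff2 (a : ℂ) (ha : a ≠ 0) (m : ℤ) :
    ((RatFunc.X * (RatFunc.X - RatFunc.C a⁻¹)⁻¹ : RatFunc ℂ) : LaurentSeries ℂ).coeff m
      = if 1 ≤ m then -(a ^ m) else 0 := by
  rw [RatFunc.coe_mul, RatFunc.coe_X, coe2 a ha]
  have : m = (m - 1) + 1 := by ring
  rw [this, HahnSeries.coeff_single_mul_add, one_mul, PowerSeries.coeff_coe]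
  by_cases h : 1 ≤ m
  · rw [if_neg (by omega : ¬ (m - 1 < 0)), if_pos (by omega : 1 ≤ m - 1 + 1)]
    rw [map_neg, PowerSeries.coeff_invUnitsSub, one_divp]
    rw [Units.val_inv_eq_inv_val]
    simp only [Units.val_pow_eq_pow_val, Units.val_mk0, inv_pow, inv_inv]
    set n := (m - 1).natAbs with hn
    have hm : (n : ℤ) + 1 = m := by
      have := Int.natAbs_of_nonneg (by omega : (0:ℤ) ≤ m - 1); omega
    rw [show m - 1 + 1 = m from by ring, ← hm, ← zpow_natCast a (n + 1)]
    push_cast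
    ring_nf
  · rw [if_pos (by omega : m - 1 < 0), if_neg (by omega : ¬ 1 ≤ m - 1 + 1)]

lemma interp (n : ℕ) (v c : Fin n → ℂ) (f : Fin n → ℂ[X]) (P : ℂ[X])
    (hv : Function.Injective v)
    (hf1 : ∀ j, (f j).degree ≤ 1) (hf0 : ∀ j, (f j).eval (v j) = 0)
    (hdeg : P.degree < n)
    (hc : ∀ k, P.eval (v k) = c k * ∏ j ∈ univ.erase k, (f j).eval (v k)) :
    P = ∑ k, Polynomial.C (c k) * ∏ j ∈ univ.erase k, f j := by
  refine Polynomial.eq_of_degrees_lt_of_eval_index_eq (univ : Finset (Fin n)) hv.injOn ?_ ?_ ?_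
  · simpa using hdeg
  · refine lt_of_le_of_lt (Polynomial.degree_sum_le _ _) ?_
    rw [Finset.sup_lt_iff (by simp)]
    intro k _
    refine lt_of_le_of_lt (Polynomial.degree_mul_le _ _) ?_
    have h1 : (Polynomial.C (c k)).degree ≤ 0 := Polynomial.degree_C_le
    have h2 : (∏ j ∈ univ.erase k, f j).degree ≤ (n - 1 : ℕ) := by
      refine le_trans (Polynomial.degree_prod_le _ _) ?_
      refine le_trans (Finset.sum_le_card_nsmul _ _ 1 (fun j _ => hf1 j)) ?_
      simp [Finset.card_erase_of_mem, Fintype.card_fin]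
    calc (Polynomial.C (c k)).degree + (∏ j ∈ univ.erase k, f j).degree
        ≤ 0 + (n - 1 : ℕ) := add_le_add h1 h2
      _ = ((n - 1 : ℕ) : WithBot ℕ) := zero_add _
      _ < (#(univ : Finset (Fin n)) : WithBot ℕ) := by
          simp only [Finset.card_univ, Fintype.card_fin]
          exact_mod_cast Nat.sub_lt (Nat.pos_of_ne_zero (by rintro rfl; exact absurd k.2 (by simp))) one_pos
  · intro k _
    rw [hc k, Polynomial.eval_finset_sum]
    rw [Finset.sum_eq_single k]
    · simp [Polynomial.eval_prod]
    · intro i _ hik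
      rw [Polynomial.eval_mul, Polynomial.eval_prod]
      rw [Finset.prod_eq_zero (Finset.mem_erase.2 ⟨(Ne.symm hik), Finset.mem_univ k⟩) (hf0 k)]
      simp
    · simp

lemma deg_prod_lt {m n : ℕ} (h : m < n) (f : Fin m → ℂ[X]) (hf : ∀ j, (f j).degree ≤ 1) :
    (∏ j, f j).degree < n := by
  have h1 : (∏ j, f j).degree ≤ (m : WithBot ℕ) := by
    refine le_trans (Polynomial.degree_prod_le _ _) ?_
    refine le_trans (Finset.sum_le_card_nsmul _ _ 1 (fun j _ => hf j)) ?_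
    simp
  exact lt_of_le_of_lt h1 (by exact_mod_cast h)

lemma deg_lin_le (x : ℂ) : (1 - Polynomial.C x * Polynomial.X : ℂ[X]).degree ≤ 1 := by
  refine le_trans (Polynomial.degree_sub_le _ _) (max_le (le_trans Polynomial.degree_one_le (by norm_num)) ?_)
  refine le_trans (Polynomial.degree_mul_le _ _) ?_
  calc (Polynomial.C x).degree + (Polynomial.X : ℂ[X]).degree ≤ 0 + 1 :=
        add_le_add Polynomial.degree_C_le Polynomial.degree_X_le
    _ = 1 := zero_add _

lemma hahn_coeff_sum {α : Type*} (s : Finset α) (f : α → LaurentSeries ℂ) (m : ℤ) :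
    (∑ x ∈ s, f x).coeff m = ∑ x ∈ s, (f x).coeff m := by
  classical
  induction s using Finset.induction with
  | empty => simp
  | insert _ _ h ih => simp [Finset.sum_insert h, HahnSeries.coeff_add, ih]

end Helpers

/-- Rational delta-function identity for the proper rational function
`f(s) = Π_{j=1}^{n-1}(1 − s/b_j) / Π_{j=1}^{n}(1 − s/a_j)`: the difference between its
Laurent expansion at `s = 0` and its expansion at `s = ∞` (encoded via the expansion at `0`
of `g(s) = f(1/s) = s·Π_{j=1}^{n-1}(s − 1/b_j)/Π_{j=1}^{n}(s − 1/a_j)`, whose coefficient at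
`s^{-m}` is the coefficient at `s^m` of the expansion of `f` at `∞`) equals
`Σ_{k=1}^n δ(a_k/s)·Π_{j=1}^{n-1}(1 − a_k/b_j)/Π_{j≠k}(1 − a_k/a_j)`, where
`δ(z) = Σ_{m∈ℤ} z^m`, i.e. the coefficient at `s^m` of `δ(a_k/s)` is `a_k^{-m}`. -/
theorem rational_delta_expansion_proper (n : ℕ) (hn : 1 ≤ n)
    (a : Fin n → ℂ) (b : Fin (n - 1) → ℂ)
    (ha0 : ∀ k, a k ≠ 0) (hb0 : ∀ j, b j ≠ 0) (hdist : Function.Injective a) :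
    ∀ m : ℤ,
      ((((∏ j : Fin (n - 1), (1 - RatFunc.C (b j)⁻¹ * RatFunc.X)) /
            ∏ k : Fin n, (1 - RatFunc.C (a k)⁻¹ * RatFunc.X) : RatFunc ℂ) :
          LaurentSeries ℂ).coeff m
        - (((RatFunc.X * ∏ j : Fin (n - 1), (RatFunc.X - RatFunc.C (b j)⁻¹)) /
              (∏ k : Fin n, (RatFunc.X - RatFunc.C (a k)⁻¹)) : RatFunc ℂ) :
            LaurentSeries ℂ).coeff (-m))
      = ∑ k : Fin n, (a k) ^ (-m) * (∏ j : Fin (n - 1), (1 - a k / b j))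
          / ∏ j ∈ Finset.univ.erase k, (1 - a k / a j) := by
  intro m
  classical
  set c : Fin n → ℂ :=
    fun k => (∏ j : Fin (n-1), (1 - a k / b j)) / ∏ j ∈ univ.erase k, (1 - a k / a j) with hcdef
  have hfac : ∀ k j : Fin n, j ≠ k → (1 - a k / a j) ≠ 0 := by
    intro k j hjk
    rw [sub_ne_zero]
    intro h
    have : a k = a j := (div_eq_one_iff_eq (ha0 j)).1 h.symm
    exact hjk (hdist this).symm
  have hD : ∀ k, (∏ j ∈ univ.erase k, (1 - a k / a j)) ≠ 0 := fun k =>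
    Finset.prod_ne_zero_iff.2 fun j hj => hfac k j (Finset.mem_erase.1 hj).1
  have hcD : ∀ k, c k * ∏ j ∈ univ.erase k, (1 - a k / a j) = ∏ j : Fin (n-1), (1 - a k / b j) :=
    fun k => div_mul_cancel₀ _ (hD k)
  -- polynomial identity A
  have hA : (∏ j : Fin (n-1), (1 - Polynomial.C (b j)⁻¹ * Polynomial.X) : Polynomial ℂ)
      = ∑ k, Polynomial.C (c k) *
          ∏ j ∈ univ.erase k, (1 - Polynomial.C (a j)⁻¹ * Polynomial.X) := by
    refine interp n a c _ _ hdist (fun j => deg_lin_le _)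
      (fun j => by simp [inv_mul_cancel₀ (ha0 j)])
      (deg_prod_lt (by omega) _ (fun j => deg_lin_le _)) ?_
    intro k
    rw [Polynomial.eval_prod]
    have e1 : ∀ j : Fin (n-1),
        Polynomial.eval (a k) (1 - Polynomial.C (b j)⁻¹ * Polynomial.X) = 1 - a k / b j := by
      intro j; simp; rw [div_eq_mul_inv]; ring
    have e2 : ∀ j : Fin n,
        Polynomial.eval (a k) (1 - Polynomial.C (a j)⁻¹ * Polynomial.X) = 1 - a k / a j := by
      intro j; simp; rw [div_eq_mul_inv]; ring
    rw [Finset.prod_congr rfl (fun j _ => e1 j), ← hcD k]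
    congr 1
    exact Finset.prod_congr rfl (fun j _ => (e2 j).symm)
  -- polynomial identity B
  have hB : (∏ j : Fin (n-1), (Polynomial.X - Polynomial.C (b j)⁻¹) : Polynomial ℂ)
      = ∑ k, Polynomial.C (c k) *
          ∏ j ∈ univ.erase k, (Polynomial.X - Polynomial.C (a j)⁻¹) := by
    refine interp n (fun k => (a k)⁻¹) c _ _ (fun x y h => hdist (inv_injective h))
      (fun j => le_of_eq (Polynomial.degree_X_sub_C _)) (fun j => by simp)
      (deg_prod_lt (by omega) _ (fun j => le_of_eq (Polynomial.degree_X_sub_C _))) ?_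
    intro k
    rw [Polynomial.eval_prod]
    have key : ∀ y : ℂ, y ≠ 0 → (a k)⁻¹ - y⁻¹ = (a k)⁻¹ * (1 - a k / y) := by
      intro y hy
      have hk := ha0 k
      field_simp
    have e1 : ∀ j : Fin (n-1),
        Polynomial.eval (a k)⁻¹ (Polynomial.X - Polynomial.C (b j)⁻¹)
          = (a k)⁻¹ * (1 - a k / b j) := by
      intro j; simp [← key _ (hb0 j)]
    have e2 : ∀ j : Fin n,
        Polynomial.eval (a k)⁻¹ (Polynomial.X - Polynomial.C (a j)⁻¹)
          = (a k)⁻¹ * (1 - a k / a j) := by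
      intro j; simp [← key _ (ha0 j)]
    rw [Finset.prod_congr rfl (fun j _ => e1 j), Finset.prod_congr rfl (fun j _ => e2 j),
      Finset.prod_mul_distrib, Finset.prod_mul_distrib, Finset.prod_const, Finset.prod_const,
      Finset.card_univ, Fintype.card_fin, Finset.card_erase_of_mem (Finset.mem_univ k),
      Finset.card_univ, Fintype.card_fin]
    rw [← hcD k]
    ring
  -- lift to RatFunc
  have hA' := congrArg (algebraMap (Polynomial ℂ) (RatFunc ℂ)) hA
  simp only [map_prod, map_sum, map_mul, map_sub, map_one,
    RatFunc.algebraMap_C, RatFunc.algebraMap_X] at hA'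
  have hB' := congrArg (algebraMap (Polynomial ℂ) (RatFunc ℂ)) hB
  simp only [map_prod, map_sum, map_mul, map_sub,
    RatFunc.algebraMap_C, RatFunc.algebraMap_X] at hB'
  have eqA : ((∏ j : Fin (n - 1), (1 - RatFunc.C (b j)⁻¹ * RatFunc.X)) /
      ∏ k : Fin n, (1 - RatFunc.C (a k)⁻¹ * RatFunc.X) : RatFunc ℂ)
      = ∑ k, RatFunc.C (c k) * (1 - RatFunc.C (a k)⁻¹ * RatFunc.X)⁻¹ := by
    rw [hA', Finset.sum_div]
    refine Finset.sum_congr rfl fun k _ => ?_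
    rw [← Finset.mul_prod_erase univ _ (Finset.mem_univ k)]
    have h1 : (1 - RatFunc.C (a k)⁻¹ * RatFunc.X : RatFunc ℂ) ≠ 0 := ratfunc_factor_ne_zero _
    have h2 : (∏ j ∈ univ.erase k, (1 - RatFunc.C (a j)⁻¹ * RatFunc.X) : RatFunc ℂ) ≠ 0 :=
      Finset.prod_ne_zero_iff.2 fun j _ => ratfunc_factor_ne_zero _
    rw [mul_div_mul_right _ _ h2, div_eq_mul_inv]
  have eqB : ((RatFunc.X * ∏ j : Fin (n - 1), (RatFunc.X - RatFunc.C (b j)⁻¹)) /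
      (∏ k : Fin n, (RatFunc.X - RatFunc.C (a k)⁻¹)) : RatFunc ℂ)
      = ∑ k, RatFunc.C (c k) * (RatFunc.X * (RatFunc.X - RatFunc.C (a k)⁻¹)⁻¹) := by
    rw [hB', Finset.mul_sum, Finset.sum_div]
    refine Finset.sum_congr rfl fun k _ => ?_
    rw [← Finset.mul_prod_erase univ _ (Finset.mem_univ k)]
    have h1 : (RatFunc.X - RatFunc.C (a k)⁻¹ : RatFunc ℂ) ≠ 0 := ratfunc_factor2_ne_zero _
    have h2 : (∏ j ∈ univ.erase k, (RatFunc.X - RatFunc.C (a j)⁻¹) : RatFunc ℂ) ≠ 0 :=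
      Finset.prod_ne_zero_iff.2 fun j _ => ratfunc_factor2_ne_zero _
    rw [show RatFunc.X * (RatFunc.C (c k) * ∏ j ∈ univ.erase k, (RatFunc.X - RatFunc.C (a j)⁻¹))
        = RatFunc.X * RatFunc.C (c k) * ∏ j ∈ univ.erase k, (RatFunc.X - RatFunc.C (a j)⁻¹) from
      (mul_assoc _ _ _).symm, mul_div_mul_right _ _ h2, div_eq_mul_inv,
      mul_comm RatFunc.X (RatFunc.C (c k)), mul_assoc]
  have hsum : ∀ (F : Fin n → RatFunc ℂ),
      ((∑ k, F k : RatFunc ℂ) : LaurentSeries ℂ) = ∑ k, ((F k : RatFunc ℂ) : LaurentSeries ℂ) := by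
    intro F
    exact map_sum _ _ _
  rw [eqA, eqB, hsum, hsum, hahn_coeff_sum, hahn_coeff_sum, ← Finset.sum_sub_distrib]
  refine Finset.sum_congr rfl fun k _ => ?_
  rw [RatFunc.coe_mul, RatFunc.coe_mul]
  have hCmul : ∀ (r : ℂ) (x : LaurentSeries ℂ) (i : ℤ),
      (HahnSeries.C r * x).coeff i = r * x.coeff i := fun r x i =>
    HahnSeries.coeff_single_zero_mul
  rw [RatFunc.coe_C, hCmul, hCmul, coeff1 _ (ha0 k), coeff2 _ (ha0 k)]
  by_cases h : 0 ≤ m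
  · rw [if_pos h, if_neg (by omega : ¬ (1:ℤ) ≤ -m)]
    simp only [hcdef, mul_zero, sub_zero]
    ring
  · rw [if_neg h, if_pos (by omega : (1:ℤ) ≤ -m)]
    simp only [hcdef, mul_zero, zero_sub, mul_neg, neg_neg]
    ring
end

section
/- For partitions λ and μ and any integer ℓ ≥ max(ℓ(λ), ℓ(μ)), the Nekrasov factor N_{λμ}(x) := Π_{□∈λ} (1 − x q^{−a_μ(□)−1} t^{−ℓ_λ(□)}) · Π_{■∈μ} (1 − x q^{a_λ(■)} t^{ℓ_μ(■)+1}) equals Π_{1≤i≤j≤ℓ} (x q^{−μ_i+λ_{j+1}} t^{i−j}; q)_{λ_j − λ_{j+1}} · Π_{1≤r≤s≤ℓ} (x q^{λ_r−μ_s} t^{−r+s+1}; q)_{μ_s − μ_{s+1}}, where (y;q)_n = Π_{k=0}^{n−1}(1 − y q^k), λ_{ℓ+1} = μ_{ℓ+1} = 0, and for □ = (i,j), a_ν(□) = ν_i − j, ℓ_ν(□) = ν'_j − i. -/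
open Finset

/-- Finite `q`-Pochhammer `(y;q)_n = Π_{k=0}^{n-1}(1 − y q^k)`. -/
def pochq {F : Type*} [CommRing F] (q y : F) (n : ℕ) : F :=
  ∏ k ∈ Finset.range n, (1 - y * q ^ k)

lemma conjPart_iff (ℓ : ℕ) (nu : ℕ → ℕ) (hmono : Antitone nu)
    (hlen : ∀ k, ℓ ≤ k → nu k = 0) (c i : ℕ) :
    c + 1 ≤ nu i ↔ i < conjPart ℓ nu (c + 1) := by
  unfold conjPart
  constructor
  · intro h
    have hiℓ : i < ℓ := by
      by_contra hcon
      push_neg at hcon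
      have := hlen i hcon
      omega
    have hsub : Finset.range (i + 1) ⊆
        (Finset.range ℓ).filter (fun i' => c + 1 ≤ nu i') := by
      intro a ha
      simp only [Finset.mem_range] at ha
      simp only [Finset.mem_filter, Finset.mem_range]
      exact ⟨by omega, le_trans h (hmono (by omega))⟩
    calc i < i + 1 := Nat.lt_succ_self i
      _ = (Finset.range (i + 1)).card := (Finset.card_range _).symm
      _ ≤ _ := Finset.card_le_card hsub
  · intro h
    by_contra hcon
    push_neg at hcon
    have hsub : (Finset.range ℓ).filter (fun i' => c + 1 ≤ nu i') ⊆ Finset.range i := by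
      intro a ha
      simp only [Finset.mem_filter, Finset.mem_range] at ha
      simp only [Finset.mem_range]
      by_contra hai
      push_neg at hai
      have := hmono hai
      omega
    have := Finset.card_le_card hsub
    simp only [Finset.card_range] at this
    omega

lemma conjPart_le (ℓ : ℕ) (nu : ℕ → ℕ) (c : ℕ) : conjPart ℓ nu c ≤ ℓ :=
  (Finset.card_filter_le _ _).trans_eq (Finset.card_range ℓ)

/-- Key regrouping lemma: group the cells of a partition row by the conjugate value of
their column. -/
lemma key_regroup {F : Type*} [CommMonoid F] (ℓ : ℕ) (nu : ℕ → ℕ)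
    (ha : ∀ k, nu (k + 1) ≤ nu k) (hlen : ∀ k, ℓ ≤ k → nu k = 0) (f : ℕ → ℕ → ℕ → F) :
    ∏ i ∈ Finset.range ℓ, ∏ j ∈ Finset.range (nu i), f i j (conjPart ℓ nu (j + 1))
    = ∏ m ∈ Finset.range ℓ, ∏ i ∈ Finset.range (m + 1),
        ∏ k ∈ Finset.range (nu m - nu (m + 1)), f i (nu (m + 1) + k) (m + 1) := by
  have hmono : Antitone nu := antitone_nat_of_succ_le ha
  have hiff := conjPart_iff ℓ nu hmono hlen
  calc
    ∏ i ∈ Finset.range ℓ, ∏ j ∈ Finset.range (nu i), f i j (conjPart ℓ nu (j + 1))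
      = ∏ p ∈ (Finset.range ℓ).sigma (fun i => Finset.range (nu i)),
          f p.1 p.2 (conjPart ℓ nu (p.2 + 1)) := by
        rw [Finset.prod_sigma]
    _ = ∏ p ∈ (Finset.range ℓ).sigma (fun m =>
            (Finset.range (m + 1)).sigma (fun _ => Finset.range (nu m - nu (m + 1)))),
          f p.2.1 (nu (p.1 + 1) + p.2.2) (p.1 + 1) := by
        refine Finset.prod_bij'
          (fun p _ => ⟨conjPart ℓ nu (p.2 + 1) - 1,
            p.1, p.2 - nu (conjPart ℓ nu (p.2 + 1))⟩)
          (fun p _ => ⟨p.2.1, nu (p.1 + 1) + p.2.2⟩) ?_ ?_ ?_ ?_ ?_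
        · rintro ⟨i, j⟩ hp
          simp only [Finset.mem_sigma, Finset.mem_range] at hp ⊢
          obtain ⟨hi, hj⟩ := hp
          set C := conjPart ℓ nu (j + 1) with hC
          have h1 : i < C := (hiff j i).mp hj
          have h2 : C ≤ ℓ := conjPart_le ℓ nu (j + 1)
          have h3 : ¬ (j + 1 ≤ nu C) := fun h => by have := (hiff j C).mp h; omega
          have h4 : j + 1 ≤ nu (C - 1) := by
            by_contra h
            push_neg at h
            have := (hiff j (C - 1)).not.mp (by omega)
            omega
          refine ⟨by omega, by omega, ?_⟩
          have : C - 1 + 1 = C := by omega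
          rw [this]
          omega
        · rintro ⟨m, i, k⟩ hp
          simp only [Finset.mem_sigma, Finset.mem_range] at hp ⊢
          obtain ⟨hm, hi, hk⟩ := hp
          have h0 := ha m
          have hjm : nu (m + 1) + k + 1 ≤ nu m := by omega
          constructor
          · omega
          · calc nu (m + 1) + k < nu m := by omega
              _ ≤ nu i := hmono (by omega)
        · rintro ⟨i, j⟩ hp
          simp only [Finset.mem_sigma, Finset.mem_range] at hp
          obtain ⟨hi, hj⟩ := hp
          set C := conjPart ℓ nu (j + 1) with hC
          have h1 : i < C := (hiff j i).mp hj
          have h3 : ¬ (j + 1 ≤ nu C) := fun h => by have := (hiff j C).mp h; omega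
          have : C - 1 + 1 = C := by omega
          simp only [this]
          have : nu C + (j - nu C) = j := by omega
          simp [this]
        · rintro ⟨m, i, k⟩ hp
          simp only [Finset.mem_sigma, Finset.mem_range] at hp
          obtain ⟨hm, hi, hk⟩ := hp
          have h0 := ha m
          set j := nu (m + 1) + k with hj
          have hCm : conjPart ℓ nu (j + 1) = m + 1 := by
            have ha1 : m < conjPart ℓ nu (j + 1) := (hiff j m).mp (by omega)
            have ha2 : ¬ (m + 1 < conjPart ℓ nu (j + 1)) := by
              intro h
              have := (hiff j (m + 1)).mpr h
              omega
            omega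
          simp only [hCm]
          simp only [Nat.add_sub_cancel]
          simp
          omega
        · rintro ⟨i, j⟩ hp
          simp only [Finset.mem_sigma, Finset.mem_range] at hp
          obtain ⟨hi, hj⟩ := hp
          set C := conjPart ℓ nu (j + 1) with hC
          have h1 : i < C := (hiff j i).mp hj
          have h3 : ¬ (j + 1 ≤ nu C) := fun h => by have := (hiff j C).mp h; omega
          have h5 : C - 1 + 1 = C := by omega
          simp only [h5]
          have h6 : nu C + (j - nu C) = j := by omega
          rw [h6]
    _ = _ := by
        rw [Finset.prod_sigma]
        refine Finset.prod_congr rfl fun m _ => ?_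
        rw [Finset.prod_sigma]

/-- Product formula for the (5d) Nekrasov factor: for partitions `λ, μ` and any `ℓ` at least
their lengths,
`N_{λμ}(x) = Π_{□∈λ}(1 − x q^{−a_μ(□)−1} t^{−ℓ_λ(□)}) Π_{■∈μ}(1 − x q^{a_λ(■)} t^{ℓ_μ(■)+1})
 = Π_{1≤i≤j≤ℓ}(x q^{−μ_i+λ_{j+1}} t^{i−j};q)_{λ_j−λ_{j+1}}
   · Π_{1≤r≤s≤ℓ}(x q^{λ_r−μ_s} t^{−r+s+1};q)_{μ_s−μ_{s+1}}`,
with `a_ν((i,j)) = ν_i − j`, `ℓ_ν((i,j)) = ν'_j − i`, and `λ_{ℓ+1} = μ_{ℓ+1} = 0`. -/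
theorem nekrasov_factor_product {F : Type*} [Field F] (q t x : F) (hq : q ≠ 0) (ht : t ≠ 0)
    (ℓ : ℕ) (lam mu : ℕ → ℕ)
    (hal : ∀ k, lam (k + 1) ≤ lam k) (hlenl : ∀ k, ℓ ≤ k → lam k = 0)
    (ham : ∀ k, mu (k + 1) ≤ mu k) (hlenm : ∀ k, ℓ ≤ k → mu k = 0) :
    (∏ i ∈ Finset.range ℓ, ∏ j ∈ Finset.range (lam i),
        (1 - x * q ^ (-((mu i : ℤ) - (j + 1)) - 1)
          * t ^ (-((conjPart ℓ lam (j + 1) : ℤ) - (i + 1)))))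
      * ∏ i ∈ Finset.range ℓ, ∏ j ∈ Finset.range (mu i),
          (1 - x * q ^ ((lam i : ℤ) - (j + 1))
            * t ^ (((conjPart ℓ mu (j + 1) : ℤ) - (i + 1)) + 1))
    = (∏ j ∈ Finset.range ℓ, ∏ i ∈ Finset.range (j + 1),
          pochq q (x * q ^ ((lam (j + 1) : ℤ) - (mu i : ℤ)) * t ^ ((i : ℤ) - (j : ℤ)))
            (lam j - lam (j + 1)))
      * ∏ s ∈ Finset.range ℓ, ∏ r ∈ Finset.range (s + 1),
          pochq q (x * q ^ ((lam r : ℤ) - (mu s : ℤ)) * t ^ ((s : ℤ) - (r : ℤ) + 1))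
            (mu s - mu (s + 1)) := by
  have h1 : (∏ i ∈ Finset.range ℓ, ∏ j ∈ Finset.range (lam i),
        (1 - x * q ^ (-((mu i : ℤ) - (j + 1)) - 1)
          * t ^ (-((conjPart ℓ lam (j + 1) : ℤ) - (i + 1)))))
      = ∏ m ∈ Finset.range ℓ, ∏ i ∈ Finset.range (m + 1),
          ∏ k ∈ Finset.range (lam m - lam (m + 1)),
            (1 - x * q ^ (-((mu i : ℤ) - ((lam (m + 1) + k : ℕ) + 1)) - 1)
              * t ^ (-(((m + 1 : ℕ) : ℤ) - (i + 1)))) :=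
    key_regroup ℓ lam hal hlenl
      (fun i j C => 1 - x * q ^ (-((mu i : ℤ) - (j + 1)) - 1) * t ^ (-((C : ℤ) - (i + 1))))
  have h2 : (∏ i ∈ Finset.range ℓ, ∏ j ∈ Finset.range (mu i),
        (1 - x * q ^ ((lam i : ℤ) - (j + 1))
          * t ^ (((conjPart ℓ mu (j + 1) : ℤ) - (i + 1)) + 1)))
      = ∏ m ∈ Finset.range ℓ, ∏ i ∈ Finset.range (m + 1),
          ∏ k ∈ Finset.range (mu m - mu (m + 1)),
            (1 - x * q ^ ((lam i : ℤ) - ((mu (m + 1) + k : ℕ) + 1))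
              * t ^ ((((m + 1 : ℕ) : ℤ) - (i + 1)) + 1)) :=
    key_regroup ℓ mu ham hlenm
      (fun i j C => 1 - x * q ^ ((lam i : ℤ) - (j + 1)) * t ^ (((C : ℤ) - (i + 1)) + 1))
  rw [h1, h2]
  congr 1
  · refine Finset.prod_congr rfl fun m hm => Finset.prod_congr rfl fun i hi => ?_
    rw [pochq]
    refine Finset.prod_congr rfl fun k hk => ?_
    have e1 : (-((mu i : ℤ) - ((lam (m + 1) + k : ℕ) + 1)) - 1)
        = ((lam (m + 1) : ℤ) - (mu i : ℤ)) + (k : ℤ) := by push_cast; ring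
    have e2 : (-(((m + 1 : ℕ) : ℤ) - ((i : ℤ) + 1))) = (i : ℤ) - (m : ℤ) := by
      push_cast; ring
    rw [e1, e2, zpow_add₀ hq, zpow_natCast]
    ring
  · refine Finset.prod_congr rfl fun s hs => Finset.prod_congr rfl fun r hr => ?_
    rw [pochq]
    rw [← Finset.prod_range_reflect
      (fun k => 1 - x * q ^ ((lam r : ℤ) - (mu s : ℤ)) * t ^ ((s : ℤ) - (r : ℤ) + 1) * q ^ k)
      (mu s - mu (s + 1))]
    refine Finset.prod_congr rfl fun k hk => ?_
    simp only [Finset.mem_range] at hk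
    have hms := ham s
    have e1 : ((lam r : ℤ) - ((mu (s + 1) + k : ℕ) + 1))
        = ((lam r : ℤ) - (mu s : ℤ)) + ((mu s - mu (s + 1) - 1 - k : ℕ) : ℤ) := by
      omega
    have e2 : ((((s + 1 : ℕ) : ℤ) - ((r : ℤ) + 1)) + 1) = (s : ℤ) - (r : ℤ) + 1 := by
      push_cast; ring
    rw [e1, e2, zpow_add₀ hq, zpow_natCast]
    ring
end

section
/- Pieri-coefficient theta identity (combinatorial core of the level-(0,1) action). Fix a partition λ with length ℓ = ℓ(λ), and set u_i = q^{λ_i} t^{−i+1} u (1 ≤ i ≤ ℓ+1, with λ_{ℓ+1} = 0) for an indeterminate u. Define A^+_{λ,i}(p) = Π_{j=1}^{i−1} θ_p(t u_i/u_j) θ_p(q t^{-1} u_i/u_j) / (θ_p(q u_i/u_j) θ_p(u_i/u_j)) and A^−_{λ,i}(p) = Π_{j=i+1}^{ℓ} θ_p(q t^{-1} u_j/u_i)/θ_p(u_j/u_i) · Π_{j=i+1}^{ℓ+1} θ_p(t u_j/u_i)/θ_p(q u_j/u_i). Then for each i with λ − 1_i a partition (i.e. λ_i > λ_{i+1}):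 A^−_{λ,i}(p) · A^+_{λ−1_i, i}(p) = (t/q) · Π_{j≠i, 1≤j≤ℓ} θ_p(t u_i/(q u_j)) / θ_p(u_i/u_j) · Π_{j≠i, 1≤j≤ℓ+1} θ_p(u_i/(t u_j)) / θ_p(u_i/(q u_j)). -/
open Finset Complex Filter

/-- `(z;p)_∞ = Π_{n≥0}(1 − z p^n)`. -/
noncomputable def qPoch (z p : ℂ) : ℂ := ∏' n : ℕ, (1 - z * p ^ n)

/-- Jacobi's odd theta function `θ_p(z) = (z;p)_∞ (p/z;p)_∞`. -/
noncomputable def theta (p z : ℂ) : ℂ := qPoch z p * qPoch (p / z) p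

lemma multipliable_aux (p w : ℂ) (hp : ‖p‖ < 1) :
    Multipliable (fun n : ℕ => 1 - w * p ^ n) := by
  by_cases hz : ∃ m : ℕ, 1 - w * p ^ m = 0
  · obtain ⟨m, hm⟩ := hz
    refine ⟨0, ?_⟩
    rw [HasProd]
    have hev : ∀ᶠ s : Finset ℕ in atTop, ∏ n ∈ s, (1 - w * p ^ n) = 0 := by
      refine eventually_atTop.2 ⟨{m}, fun s hs => Finset.prod_eq_zero (hs (Finset.mem_singleton_self m)) hm⟩
    exact Tendsto.congr' (hev.mono fun s hs => hs.symm) tendsto_const_nhds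
  · push_neg at hz
    have hsum : Summable (fun n : ℕ => Complex.log (1 - w * p ^ n)) := by
      have hgeo : Summable (fun n : ℕ => (3/2 : ℝ) * (‖w‖ * ‖p‖ ^ n)) := by
        refine Summable.mul_left _ (Summable.mul_left _ ?_)
        exact summable_geometric_of_lt_one (by positivity) hp
      refine Summable.of_norm_bounded_eventually_nat hgeo ?_
      have htend : Tendsto (fun n : ℕ => ‖w‖ * ‖p‖ ^ n) atTop (nhds 0) := by
        simpa using (tendsto_pow_atTop_nhds_zero_of_lt_one (by positivity) hp).const_mul ‖w‖
      have hsmall : ∀ᶠ n : ℕ in atTop, ‖w‖ * ‖p‖ ^ n ≤ 1/2 := by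
        filter_upwards [htend.eventually_le_const (by norm_num : (0:ℝ) < 1/2)] with n hn
        exact hn
      filter_upwards [hsmall] with n hn
      have h1 : ‖(-(w * p ^ n) : ℂ)‖ ≤ 1/2 := by
        simp only [norm_neg, norm_mul, norm_pow]
        exact hn
      have := Complex.norm_log_one_add_half_le_self h1
      rw [show (1 : ℂ) + -(w * p ^ n) = 1 - w * p ^ n by ring] at this
      refine this.trans ?_
      simp only [norm_neg, norm_mul, norm_pow]
      exact le_of_eq (by ring)
    exact Complex.multipliable_of_summable_log hsum

lemma qPoch_peel (p w : ℂ) (hp : ‖p‖ < 1) :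
    qPoch w p = (1 - w) * qPoch (w * p) p := by
  have hm : Multipliable (fun n : ℕ => 1 - w * p ^ (n + 1)) := by
    have := multipliable_aux p (w * p) hp
    refine this.congr fun n => ?_
    ring
  have := tprod_eq_zero_mul' (f := fun n : ℕ => 1 - w * p ^ n) hm
  unfold qPoch
  rw [this]
  simp only [pow_zero, mul_one]
  congr 1
  exact tprod_congr fun n => by ring

lemma theta_inv (p z : ℂ) (hp : ‖p‖ < 1) (hz : z ≠ 0) :
    theta p z⁻¹ = -z⁻¹ * theta p z := by
  unfold theta
  rw [show p / z⁻¹ = p * z by field_simp, qPoch_peel p z⁻¹ hp, qPoch_peel p z hp,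
    show z⁻¹ * p = p / z by field_simp [mul_comm], show z * p = p * z by ring]
  have h1 : (1 - z⁻¹) = -z⁻¹ * (1 - z) := by
    field_simp
    ring
  rw [h1]
  ring

lemma ratio_flip (p : ℂ) (hp : ‖p‖ < 1) {x y : ℂ} (hx : x ≠ 0) (hy : y ≠ 0) :
    theta p x⁻¹ / theta p y⁻¹ = (y / x) * (theta p x / theta p y) := by
  rw [theta_inv p x hp hx, theta_inv p y hp hy, mul_div_mul_comm]
  congr 1
  field_simp

/-- Pieri-coefficient theta identity: with `u_k = q^{λ_k} t^{−k+1} u` (1-indexed,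
`λ_{ℓ+1} = 0`) and, for `λ − 1_i`, `v_k = q^{(λ−1_i)_k} t^{−k+1} u`,
`A^−_{λ,i}(p) = Π_{j=i+1}^{ℓ} θ_p(q t⁻¹ u_j/u_i)/θ_p(u_j/u_i)
               · Π_{j=i+1}^{ℓ+1} θ_p(t u_j/u_i)/θ_p(q u_j/u_i)`,
`A^+_{λ−1_i,i}(p) = Π_{j=1}^{i−1} θ_p(t v_i/v_j) θ_p(q t⁻¹ v_i/v_j)
                      /(θ_p(q v_i/v_j) θ_p(v_i/v_j))`;
then for `1 ≤ i ≤ ℓ` with `λ_i > λ_{i+1}`: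
`A^−_{λ,i}(p)·A^+_{λ−1_i,i}(p) = (t/q)·Π_{j≠i,1≤j≤ℓ} θ_p(t u_i/(q u_j))/θ_p(u_i/u_j)
  · Π_{j≠i,1≤j≤ℓ+1} θ_p(u_i/(t u_j))/θ_p(u_i/(q u_j))`. -/
theorem pieri_theta_identity (p q t u : ℂ) (hp : ‖p‖ < 1) (hp0 : p ≠ 0)
    (hq : q ≠ 0) (ht : t ≠ 0) (hu : u ≠ 0)
    (hgen : ∀ a b c : ℤ, b ≠ 0 → q ^ a * t ^ b * p ^ c ≠ 1)
    (ℓ : ℕ) (lam : ℕ → ℕ)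
    (hanti : ∀ k, lam (k + 1) ≤ lam k)
    (hlen : ∀ k, ℓ ≤ k → lam k = 0)
    (hpos : ∀ k, k < ℓ → 0 < lam k)
    (i : ℕ) (hi1 : 1 ≤ i) (hi2 : i ≤ ℓ) (hrem : lam i < lam (i - 1)) :
    (fun (uu vv : ℕ → ℂ) =>
      ((∏ j ∈ Finset.Icc (i + 1) ℓ, theta p (q * t⁻¹ * uu j / uu i) / theta p (uu j / uu i))
          * ∏ j ∈ Finset.Icc (i + 1) (ℓ + 1), theta p (t * uu j / uu i) / theta p (q * uu j / uu i))
        * ∏ j ∈ Finset.Icc 1 (i - 1),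
            theta p (t * vv i / vv j) * theta p (q * t⁻¹ * vv i / vv j)
              / (theta p (q * vv i / vv j) * theta p (vv i / vv j))
      = (t / q)
          * (∏ j ∈ (Finset.Icc 1 ℓ).erase i, theta p (t * uu i / (q * uu j)) / theta p (uu i / uu j))
          * ∏ j ∈ (Finset.Icc 1 (ℓ + 1)).erase i, theta p (uu i / (t * uu j)) / theta p (uu i / (q * uu j)))
      (fun k => q ^ (lam (k - 1)) * t ^ (1 - (k : ℤ)) * u)
      (fun k => q ^ (if k = i then lam (k - 1) - 1 else lam (k - 1)) * t ^ (1 - (k : ℤ)) * u) := by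
  set U : ℕ → ℂ := fun k => q ^ (lam (k - 1)) * t ^ (1 - (k : ℤ)) * u with hUdef
  set V : ℕ → ℂ := fun k => q ^ (if k = i then lam (k - 1) - 1 else lam (k - 1)) * t ^ (1 - (k : ℤ)) * u with hVdef
  clear_value U V
  have hU0 : ∀ k, U k ≠ 0 := by
    intro k
    rw [hUdef]
    exact mul_ne_zero (mul_ne_zero (pow_ne_zero _ hq) (zpow_ne_zero _ ht)) hu
  have hVU : ∀ k, k ≠ i → V k = U k := by
    intro k hk; simp only [hVdef, hUdef, if_neg hk]
  have hVi : V i = U i * q⁻¹ := by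
    have h1 : 1 ≤ lam (i - 1) := by omega
    simp only [hVdef, hUdef, if_pos rfl, if_true]
    rw [show lam (i-1) = (lam (i-1) - 1) + 1 by omega, pow_succ]
    field_simp
    ring
    congr 1
    omega
  -- per-term identities
  have key1 : ∀ j, j ≠ i →
      theta p (t * V i / V j) * theta p (q * t⁻¹ * V i / V j)
        / (theta p (q * V i / V j) * theta p (V i / V j))
      = (theta p (t * U i / (q * U j)) / theta p (U i / U j))
          * (theta p (U i / (t * U j)) / theta p (U i / (q * U j))) := by
    intro j hj
    rw [hVU j hj, hVi]
    have e1 : t * (U i * q⁻¹) / U j = t * U i / (q * U j) := by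
      field_simp [hU0 i, hU0 j]; try ring
    have e2 : q * t⁻¹ * (U i * q⁻¹) / U j = U i / (t * U j) := by
      field_simp [hU0 i, hU0 j]; try ring
    have e3 : q * (U i * q⁻¹) / U j = U i / U j := by
      field_simp [hU0 i, hU0 j]; try ring
    have e4 : U i * q⁻¹ / U j = U i / (q * U j) := by
      field_simp [hU0 i, hU0 j]; try ring
    rw [e1, e2, e3, e4, div_mul_div_comm]
  have key2 : ∀ j : ℕ,
      (theta p (t * U i / (q * U j)) / theta p (U i / U j))
        * (theta p (U i / (t * U j)) / theta p (U i / (q * U j)))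
      = (theta p (q * t⁻¹ * U j / U i) / theta p (U j / U i))
          * (theta p (t * U j / U i) / theta p (q * U j / U i)) := by
    intro j
    have hxj : ∀ c : ℂ, c ≠ 0 → c * U j / U i ≠ 0 := fun c hc =>
      div_ne_zero (mul_ne_zero hc (hU0 j)) (hU0 i)
    have h1 : theta p (t * U i / (q * U j)) / theta p (U i / U j)
        = (t / q) * (theta p (q * t⁻¹ * U j / U i) / theta p (U j / U i)) := by
      have ex : t * U i / (q * U j) = (q * t⁻¹ * U j / U i)⁻¹ := by
        field_simp [hU0 i, hU0 j]; try ring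
      have ey : U i / U j = (U j / U i)⁻¹ := by rw [inv_div]
      rw [ex, ey, ratio_flip p hp (hxj _ (mul_ne_zero hq (inv_ne_zero ht)))
        (div_ne_zero (hU0 j) (hU0 i))]
      congr 1
      field_simp [hU0 i, hU0 j]
      try ring
    have h2 : theta p (U i / (t * U j)) / theta p (U i / (q * U j))
        = (q / t) * (theta p (t * U j / U i) / theta p (q * U j / U i)) := by
      have ex : U i / (t * U j) = (t * U j / U i)⁻¹ := by rw [inv_div]
      have ey : U i / (q * U j) = (q * U j / U i)⁻¹ := by rw [inv_div]
      rw [ex, ey, ratio_flip p hp (hxj _ ht) (hxj _ hq)]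
      congr 1
      field_simp [hU0 i, hU0 j]
      try ring
    rw [h1, h2, mul_mul_mul_comm]
    rw [show t / q * (q / t) = 1 by field_simp, one_mul]
  have key3 : (t / q) * (theta p (U i / (t * U (ℓ+1))) / theta p (U i / (q * U (ℓ+1))))
      = theta p (t * U (ℓ+1) / U i) / theta p (q * U (ℓ+1) / U i) := by
    have hxj : ∀ c : ℂ, c ≠ 0 → c * U (ℓ+1) / U i ≠ 0 := fun c hc =>
      div_ne_zero (mul_ne_zero hc (hU0 _)) (hU0 i)
    have ex : U i / (t * U (ℓ+1)) = (t * U (ℓ+1) / U i)⁻¹ := by rw [inv_div]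
    have ey : U i / (q * U (ℓ+1)) = (q * U (ℓ+1) / U i)⁻¹ := by rw [inv_div]
    rw [ex, ey, ratio_flip p hp (hxj _ ht) (hxj _ hq)]
    rw [← mul_assoc, show t / q * (q * U (ℓ+1) / U i / (t * U (ℓ+1) / U i)) = 1 by
      field_simp [hU0 i, hU0 (ℓ+1)]; try ring, one_mul]
  -- split the erase-products
  have hset1 : (Finset.Icc 1 ℓ).erase i = Finset.Icc 1 (i-1) ∪ Finset.Icc (i+1) ℓ := by
    ext x
    simp only [Finset.mem_erase, Finset.mem_Icc, Finset.mem_union]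
    omega
  have hset2 : (Finset.Icc 1 (ℓ+1)).erase i = Finset.Icc 1 (i-1) ∪ Finset.Icc (i+1) (ℓ+1) := by
    ext x
    simp only [Finset.mem_erase, Finset.mem_Icc, Finset.mem_union]
    omega
  have hdisj : ∀ n : ℕ, Disjoint (Finset.Icc 1 (i-1)) (Finset.Icc (i+1) n) := by
    intro n
    simp only [Finset.disjoint_left, Finset.mem_Icc]
    omega
  rw [hset1, hset2, Finset.prod_union (hdisj ℓ), Finset.prod_union (hdisj (ℓ+1)),
    Finset.prod_Icc_succ_top (show i+1 ≤ ℓ+1 by omega),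
    Finset.prod_Icc_succ_top (show i+1 ≤ ℓ+1 by omega)]
  have E1 : (∏ j ∈ Finset.Icc 1 (i-1),
        theta p (t * V i / V j) * theta p (q * t⁻¹ * V i / V j)
          / (theta p (q * V i / V j) * theta p (V i / V j)))
      = (∏ j ∈ Finset.Icc 1 (i-1), theta p (t * U i / (q * U j)) / theta p (U i / U j))
        * ∏ j ∈ Finset.Icc 1 (i-1), theta p (U i / (t * U j)) / theta p (U i / (q * U j)) := by
    rw [← Finset.prod_mul_distrib]
    refine Finset.prod_congr rfl fun j hj => ?_
    have : j ≠ i := by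
      simp only [Finset.mem_Icc] at hj
      omega
    exact key1 j this
  have E2 : (∏ j ∈ Finset.Icc (i+1) ℓ, theta p (t * U i / (q * U j)) / theta p (U i / U j))
        * (∏ j ∈ Finset.Icc (i+1) ℓ, theta p (U i / (t * U j)) / theta p (U i / (q * U j)))
      = (∏ j ∈ Finset.Icc (i+1) ℓ, theta p (q * t⁻¹ * U j / U i) / theta p (U j / U i))
        * ∏ j ∈ Finset.Icc (i+1) ℓ, theta p (t * U j / U i) / theta p (q * U j / U i) := by
    rw [← Finset.prod_mul_distrib, ← Finset.prod_mul_distrib]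
    exact Finset.prod_congr rfl fun j _ => key2 j
  rw [E1]
  linear_combination
    (-( (∏ j ∈ Finset.Icc 1 (i-1), theta p (t * U i / (q * U j)) / theta p (U i / U j))
      * (∏ j ∈ Finset.Icc 1 (i-1), theta p (U i / (t * U j)) / theta p (U i / (q * U j)))
      * (theta p (t * U (ℓ+1) / U i) / theta p (q * U (ℓ+1) / U i)) )) * E2
    + (-( (∏ j ∈ Finset.Icc 1 (i-1), theta p (t * U i / (q * U j)) / theta p (U i / U j))
      * (∏ j ∈ Finset.Icc 1 (i-1), theta p (U i / (t * U j)) / theta p (U i / (q * U j)))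
      * (∏ j ∈ Finset.Icc (i+1) ℓ, theta p (t * U i / (q * U j)) / theta p (U i / U j))
      * (∏ j ∈ Finset.Icc (i+1) ℓ, theta p (U i / (t * U j)) / theta p (U i / (q * U j))) )) * key3
end
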